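/- arXiv:2205.04370 — 5 statements merged into one kernel-verified Lean document; each statement's English description precedes it below -/
import Mathlib

section
/- The two-dimensional simplex S = {(x1,x2) ∈ ℝ² : x1 ≥ 0, x2 ≥ 0, x1 + x2 ≤ 1} is positively invariant under the flow of the Lotka-Volterra vector field F(x1,x2) = (x1(1 - x1 - 2x2), x2(2x1 + x2 - 1)). -/
open Set

/-- The cyclic Lotka-Volterra vector field F(x₁,x₂) = (x₁(1-x₁-2x₂), x₂(2x₁+x₂-1)). -/
def LV (p : ℝ × ℝ) : ℝ × ℝ := (p.1 * (1 - p.1 - 2 * p.2), p.2 * (2 * p.1 + p.2 - 1))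

/-- The two-dimensional simplex S. -/
def Simplex2 : Set (ℝ × ℝ) := {p | 0 ≤ p.1 ∧ 0 ≤ p.2 ∧ p.1 + p.2 ≤ 1}

/-- A scalar quantity satisfying a linear ODE `y' = a t * y` with continuous coefficient
stays nonnegative if it starts nonnegative. -/
lemma nonneg_of_linear_ode {T : ℝ} {y a : ℝ → ℝ}
    (hy : ∀ t ∈ Icc (0:ℝ) T, HasDerivAt y (a t * y t) t)
    (ha : ContinuousOn a (Icc (0:ℝ) T))
    (h0 : 0 ≤ y 0) : ∀ t ∈ Icc (0:ℝ) T, 0 ≤ y t := by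
  intro t ht
  by_contra hneg
  push_neg at hneg
  have hT0 : (0:ℝ) ≤ T := ht.1.trans ht.2
  obtain ⟨M, hM⟩ := isCompact_Icc.exists_bound_of_continuousOn ha
  have hycont : ContinuousOn y (Icc 0 t) := fun s hs =>
    ((hy s ⟨hs.1, hs.2.trans ht.2⟩).continuousAt).continuousWithinAt
  -- IVT: there is a zero of y in [0, t]
  have h0mem : (0:ℝ) ∈ Icc (y t) (y 0) := ⟨hneg.le, h0⟩
  obtain ⟨t0, ht0, hyt0⟩ := intermediate_value_Icc' ht.1 hycont h0mem
  -- Gronwall on [t0, t]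
  have key := norm_le_gronwallBound_of_norm_deriv_right_le
    (f := y) (f' := fun s => a s * y s) (δ := 0) (K := M) (ε := 0) (a := t0) (b := t)
    (hycont.mono (Icc_subset_Icc ht0.1 le_rfl))
    (fun s hs => (hy s ⟨ht0.1.trans hs.1, hs.2.le.trans ht.2⟩).hasDerivWithinAt)
    (by simp [hyt0])
    (fun s hs => by
      have hsT : s ∈ Icc (0:ℝ) T := ⟨ht0.1.trans hs.1, hs.2.le.trans ht.2⟩
      have := hM s hsT
      calc ‖a s * y s‖ = ‖a s‖ * ‖y s‖ := norm_mul _ _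
        _ ≤ M * ‖y s‖ + 0 := by
            simpa using mul_le_mul_of_nonneg_right this (norm_nonneg (y s)))
    t ⟨ht0.2, le_rfl⟩
  rw [gronwallBound_ε0] at key
  simp at key
  exact absurd key (by simpa [abs_of_neg hneg] using hneg.ne)

/-- S is positively invariant under the flow of the Lotka-Volterra field. -/
theorem stmt_4 (X : ℝ → ℝ × ℝ) (Tend : ℝ)
    (hode : ∀ t ∈ Icc (0:ℝ) Tend, HasDerivAt X (LV (X t)) t)
    (h0 : X 0 ∈ Simplex2) :
    ∀ t ∈ Icc (0:ℝ) Tend, X t ∈ Simplex2 := by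
  set x1 : ℝ → ℝ := fun t => (X t).1 with hx1
  set x2 : ℝ → ℝ := fun t => (X t).2 with hx2
  -- component derivatives
  have hd1 : ∀ t ∈ Icc (0:ℝ) Tend, HasDerivAt x1 ((LV (X t)).1) t := by
    intro t ht
    exact HasDerivAt.congr_deriv ((ContinuousLinearMap.fst ℝ ℝ ℝ).hasFDerivAt.comp t
      (hode t ht).hasFDerivAt).hasDerivAt (by simp)
  have hd2 : ∀ t ∈ Icc (0:ℝ) Tend, HasDerivAt x2 ((LV (X t)).2) t := by
    intro t ht
    exact HasDerivAt.congr_deriv ((ContinuousLinearMap.snd ℝ ℝ ℝ).hasFDerivAt.comp t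
      (hode t ht).hasFDerivAt).hasDerivAt (by simp)
  -- continuity of components on the interval
  have hc1 : ContinuousOn x1 (Icc 0 Tend) := fun s hs =>
    ((hd1 s hs).continuousAt).continuousWithinAt
  have hc2 : ContinuousOn x2 (Icc 0 Tend) := fun s hs =>
    ((hd2 s hs).continuousAt).continuousWithinAt
  -- x1 ≥ 0
  have H1 : ∀ t ∈ Icc (0:ℝ) Tend, 0 ≤ x1 t := by
    refine nonneg_of_linear_ode (a := fun t => 1 - x1 t - 2 * x2 t) ?_ ?_ h0.1
    · intro t ht
      have := hd1 t ht
      simpa [LV, mul_comm] using this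
    · exact (continuousOn_const.sub hc1).sub (continuousOn_const.mul hc2)
  -- x2 ≥ 0
  have H2 : ∀ t ∈ Icc (0:ℝ) Tend, 0 ≤ x2 t := by
    refine nonneg_of_linear_ode (a := fun t => 2 * x1 t + x2 t - 1) ?_ ?_ h0.2.1
    · intro t ht
      have := hd2 t ht
      simpa [LV, mul_comm] using this
    · exact ((continuousOn_const.mul hc1).add hc2).sub continuousOn_const
  -- 1 - x1 - x2 ≥ 0
  have H3 : ∀ t ∈ Icc (0:ℝ) Tend, 0 ≤ 1 - x1 t - x2 t := by
    refine nonneg_of_linear_ode (y := fun t => 1 - x1 t - x2 t)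
      (a := fun t => x2 t - x1 t) ?_ (hc2.sub hc1) ?_
    · intro t ht
      have h := ((hasDerivAt_const t (1:ℝ)).sub (hd1 t ht)).sub (hd2 t ht)
      refine HasDerivAt.congr_deriv h ?_
      simp [LV]
      ring
    · show (0:ℝ) ≤ 1 - x1 0 - x2 0
      have := h0.2.2
      simp only [hx1, hx2]
      linarith
  intro t ht
  exact ⟨H1 t ht, H2 t ht, by linarith [H3 t ht]⟩
end

section
/- For z ∈ (0,1/27), the period of the closed orbit of F on the level set {x1 x2 x3 = z} equals T(z) = 2∫_{x^min(z)}^{x^max(z)} dx/√(x²(1-x)² - 4zx), and this integral satisfies the bounds (2/√(χ̄(z)))·π ≤ T(z) ≤ (2/√(χ_(z)))·π, where χ_(z) = min and χ̄(z) = max over x ∈ (x^min(z), x^max(z)) of (x^add(z) - x)·x. -/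
open Set

open MeasureTheory intervalIntegral


/-- sign constancy for a nonvanishing continuous real function on ℝ -/
lemma aux_sign_const {y : ℝ → ℝ} (hc : Continuous y) (h0 : ∀ t, y t ≠ 0) :
    (∀ t, 0 < y t) ∨ (∀ t, y t < 0) := by
  rcases lt_or_gt_of_ne (h0 0) with h | h
  · right
    intro t
    rcases lt_or_gt_of_ne (h0 t) with h' | h'
    · exact h'
    · exfalso
      have : (0:ℝ) ∈ uIcc (y 0) (y t) := by
        rw [mem_uIcc]; left; exact ⟨h.le, h'.le⟩
      obtain ⟨s, _, hs⟩ := intermediate_value_uIcc hc.continuousOn this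
      exact h0 s hs
  · left
    intro t
    rcases lt_or_gt_of_ne (h0 t) with h' | h'
    · exfalso
      have : (0:ℝ) ∈ uIcc (y 0) (y t) := by
        rw [mem_uIcc]; right; exact ⟨h'.le, h.le⟩
      obtain ⟨s, _, hs⟩ := intermediate_value_uIcc hc.continuousOn this
      exact h0 s hs
    · exact h'

lemma aux_lipLV : LipschitzOnWith 7 LV (Metric.closedBall (0:ℝ × ℝ) 1) := by
  rw [lipschitzOnWith_iff_dist_le_mul]
  intro p hp q hq
  rw [Metric.mem_closedBall, dist_zero_right] at hp hq
  have hp1 : |p.1| ≤ 1 := le_trans (norm_fst_le p) hp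
  have hp2 : |p.2| ≤ 1 := le_trans (norm_snd_le p) hp
  have hq1 : |q.1| ≤ 1 := le_trans (norm_fst_le q) hq
  have hq2 : |q.2| ≤ 1 := le_trans (norm_snd_le q) hq
  have hd1 : |p.1 - q.1| ≤ dist p q := by
    rw [Prod.dist_eq, ← Real.dist_eq]; exact le_max_left _ _
  have hd2 : |p.2 - q.2| ≤ dist p q := by
    rw [Prod.dist_eq, ← Real.dist_eq]; exact le_max_right _ _
  have hdn : (0:ℝ) ≤ dist p q := dist_nonneg
  have hA : |1 - p.1 - q.1 - 2 * p.2| ≤ 5 := by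
    rw [abs_le]
    obtain ⟨a1, a2⟩ := abs_le.mp hp1
    obtain ⟨b1, b2⟩ := abs_le.mp hq1
    obtain ⟨c1, c2⟩ := abs_le.mp hp2
    constructor <;> linarith
  have hB : |2 * p.1 + p.2 + q.2 - 1| ≤ 5 := by
    rw [abs_le]
    obtain ⟨a1, a2⟩ := abs_le.mp hp1
    obtain ⟨c1, c2⟩ := abs_le.mp hp2
    obtain ⟨d1, d2⟩ := abs_le.mp hq2
    constructor <;> linarith
  rw [Prod.dist_eq]
  apply max_le
  · show dist (LV p).1 (LV q).1 ≤ _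
    rw [Real.dist_eq]
    have key : (LV p).1 - (LV q).1
        = (p.1 - q.1) * (1 - p.1 - q.1 - 2 * p.2) + (-2 * q.1) * (p.2 - q.2) := by
      simp only [LV]; ring
    rw [key]
    have b1 : |(p.1 - q.1) * (1 - p.1 - q.1 - 2 * p.2)| ≤ dist p q * 5 := by
      rw [abs_mul]; exact mul_le_mul hd1 hA (abs_nonneg _) hdn
    have b2 : |(-2 * q.1) * (p.2 - q.2)| ≤ 2 * dist p q := by
      rw [abs_mul]
      have h2q : |(-2 : ℝ) * q.1| ≤ 2 := by
        rw [abs_mul, abs_neg, abs_two]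
        linarith [abs_nonneg q.1]
      exact mul_le_mul h2q hd2 (abs_nonneg _) (by norm_num)
    refine le_trans (abs_add_le _ _) (le_trans (add_le_add b1 b2) ?_)
    push_cast
    linarith
  · show dist (LV p).2 (LV q).2 ≤ _
    rw [Real.dist_eq]
    have key : (LV p).2 - (LV q).2
        = (p.2 - q.2) * (2 * p.1 + p.2 + q.2 - 1) + (2 * q.2) * (p.1 - q.1) := by
      simp only [LV]; ring
    rw [key]
    have b1 : |(p.2 - q.2) * (2 * p.1 + p.2 + q.2 - 1)| ≤ dist p q * 5 := by
      rw [abs_mul]; exact mul_le_mul hd2 hB (abs_nonneg _) hdn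
    have b2 : |(2 * q.2) * (p.1 - q.1)| ≤ 2 * dist p q := by
      rw [abs_mul]
      have h2q : |(2 : ℝ) * q.2| ≤ 2 := by
        rw [abs_mul, abs_two]
        linarith [abs_nonneg q.2]
      exact mul_le_mul h2q hd1 (abs_nonneg _) (by norm_num)
    refine le_trans (abs_add_le _ _) (le_trans (add_le_add b1 b2) ?_)
    push_cast
    linarith

/-- global uniqueness for solutions of the LV ODE staying in the unit ball -/
lemma aux_uniq {F G : ℝ → ℝ × ℝ}
    (hF : ∀ t, HasDerivAt F (LV (F t)) t) (hG : ∀ t, HasDerivAt G (LV (G t)) t)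
    (hFb : ∀ t, F t ∈ Metric.closedBall (0:ℝ × ℝ) 1)
    (hGb : ∀ t, G t ∈ Metric.closedBall (0:ℝ × ℝ) 1)
    {t₀ : ℝ} (h0 : F t₀ = G t₀) : ∀ t, F t = G t := by
  intro t
  have hv : ∀ s : ℝ, LipschitzOnWith 7 (fun p => LV p) (Metric.closedBall (0:ℝ × ℝ) 1) :=
    fun _ => aux_lipLV
  have hmem : t ∈ Icc (min t₀ t - 1) (max t₀ t + 1) := by
    constructor
    · have := min_le_right t₀ t; linarith
    · have := le_max_right t₀ t; linarith
  have ht₀ : t₀ ∈ Ioo (min t₀ t - 1) (max t₀ t + 1) := by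
    constructor
    · have := min_le_left t₀ t; linarith
    · have := le_max_left t₀ t; linarith
  exact ODE_solution_unique_of_mem_Icc (v := fun _ p => LV p)
    (s := fun _ => Metric.closedBall (0:ℝ × ℝ) 1) (fun s _ => hv s) ht₀
    (fun s _ => (hF s).continuousAt.continuousWithinAt)
    (fun s _ => hF s) (fun s _ => hFb s)
    (fun s _ => (hG s).continuousAt.continuousWithinAt)
    (fun s _ => hG s) (fun s _ => hGb s) h0 hmem


open Set MeasureTheory intervalIntegral

lemma aux_rpow_shift {a m : ℝ} :
    IntervalIntegrable (fun x => (x - a) ^ (-(1/2) : ℝ)) volume a m := by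
  have h := (intervalIntegrable_rpow' (a := 0) (b := m - a) (r := -(1/2)) (by norm_num)).comp_sub_right a
  simpa using h

lemma aux_rpow_shift' {m b : ℝ} :
    IntervalIntegrable (fun x => (b - x) ^ (-(1/2) : ℝ)) volume m b := by
  have h := (intervalIntegrable_rpow' (a := 0) (b := b - m) (r := -(1/2)) (by norm_num)).comp_sub_left b
  have h2 : IntervalIntegrable (fun x => (b - x) ^ (-(1/2) : ℝ)) volume (b - (b - m)) (b - 0) := h.symm
  simpa using h2

lemma aux_sqrt_inv_le {c y : ℝ} (hc : 0 < c) (hy : c ≤ y) (w : ℝ) (hw : 0 ≤ w) :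
    1 / Real.sqrt (w * y) ≤ (1 / Real.sqrt c) * w ^ (-(1/2) : ℝ) := by
  rcases eq_or_lt_of_le hw with h | hw
  · rw [← h, Real.zero_rpow (by norm_num : -(1/2:ℝ) ≠ 0)]
    simp
  · have hy0 : 0 < y := lt_of_lt_of_le hc hy
    rw [Real.sqrt_mul hw.le, Real.rpow_neg hw.le, ← Real.sqrt_eq_rpow, one_div, one_div,
      mul_inv, mul_comm ((Real.sqrt c)⁻¹)]
    gcongr (Real.sqrt w)⁻¹ * ?_
    apply inv_anti₀ (Real.sqrt_pos.mpr hc)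
    exact Real.sqrt_le_sqrt hy

lemma aux_h_integrable {a b : ℝ} (hab : a < b) :
    IntervalIntegrable (fun x => 1 / Real.sqrt ((x - a) * (b - x))) volume a b := by
  set m := (a + b) / 2 with hm
  have ham : a < m := by rw [hm]; linarith
  have hmb : m < b := by rw [hm]; linarith
  have hr : (0:ℝ) < (b - a) / 2 := by linarith
  have hmeas : AEStronglyMeasurable (fun x => 1 / Real.sqrt ((x - a) * (b - x)))
      (volume.restrict (Set.uIoc a m)) := by
    apply Measurable.aestronglyMeasurable
    apply Measurable.div measurable_const
    exact (Real.continuous_sqrt.comp (by continuity)).measurable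
  have hmeas' : AEStronglyMeasurable (fun x => 1 / Real.sqrt ((x - a) * (b - x)))
      (volume.restrict (Set.uIoc m b)) := by
    apply Measurable.aestronglyMeasurable
    apply Measurable.div measurable_const
    exact (Real.continuous_sqrt.comp (by continuity)).measurable
  have left : IntervalIntegrable (fun x => 1 / Real.sqrt ((x - a) * (b - x))) volume a m := by
    apply IntervalIntegrable.mono_fun' ((aux_rpow_shift (a := a) (m := m)).const_mul (1 / Real.sqrt ((b-a)/2))) hmeas
    rw [uIoc_of_le ham.le, Filter.EventuallyLE, ae_restrict_iff' measurableSet_Ioc]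
    apply ae_of_all
    intro x hx
    have hxa : 0 ≤ x - a := by linarith [hx.1]
    have hbx : (b - a)/2 ≤ b - x := by
      have := hx.2; rw [hm] at this; linarith
    have hnn : (0:ℝ) ≤ 1 / Real.sqrt ((x - a) * (b - x)) := by positivity
    rw [Real.norm_eq_abs, abs_of_nonneg hnn]
    exact aux_sqrt_inv_le hr hbx _ hxa
  have right : IntervalIntegrable (fun x => 1 / Real.sqrt ((x - a) * (b - x))) volume m b := by
    apply IntervalIntegrable.mono_fun' ((aux_rpow_shift' (m := m) (b := b)).const_mul (1 / Real.sqrt ((b-a)/2))) hmeas'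
    rw [uIoc_of_le hmb.le, Filter.EventuallyLE, ae_restrict_iff' measurableSet_Ioc]
    apply ae_of_all
    intro x hx
    have hbx : 0 ≤ b - x := by linarith [hx.2]
    have hxa : (b - a)/2 ≤ x - a := by
      have := hx.1; rw [hm] at this; linarith
    have hnn : (0:ℝ) ≤ 1 / Real.sqrt ((x - a) * (b - x)) := by positivity
    rw [Real.norm_eq_abs, abs_of_nonneg hnn]
    have h5 := aux_sqrt_inv_le hr hxa _ hbx
    rw [mul_comm (b - x) (x - a)] at h5
    exact h5
  exact left.trans right

lemma aux_h_integral {a b : ℝ} (hab : a < b) :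
    ∫ x in a..b, 1 / Real.sqrt ((x - a) * (b - x)) = Real.pi := by
  have hba : (0:ℝ) < b - a := by linarith
  set F : ℝ → ℝ := fun x => Real.arcsin ((2 * x - (a + b)) / (b - a)) with hF
  have hFcont : ContinuousOn F (Icc a b) := by
    apply Continuous.continuousOn
    exact Real.continuous_arcsin.comp (by continuity)
  have hFderiv : ∀ x ∈ Ioo a b, HasDerivWithinAt F (1 / Real.sqrt ((x - a) * (b - x))) (Ioi x) x := by
    intro x hx
    set y := (2 * x - (a + b)) / (b - a) with hy
    have hy1 : -1 < y := by
      rw [hy, lt_div_iff₀ hba]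
      nlinarith [hx.1]
    have hy2 : y < 1 := by
      rw [hy, div_lt_iff₀ hba]
      nlinarith [hx.2]
    have hyd : HasDerivAt (fun x : ℝ => (2 * x - (a + b)) / (b - a)) (2 / (b - a)) x := by
      have h1 : HasDerivAt (fun x : ℝ => 2 * x - (a + b)) 2 x := by
        simpa using ((hasDerivAt_id x).const_mul (2:ℝ)).sub_const (a + b)
      simpa using h1.div_const (b - a)
    have harc := (Real.hasDerivAt_arcsin (ne_of_gt hy1) (ne_of_lt hy2)).comp x hyd
    have hsq : Real.sqrt (1 - y ^ 2) = 2 * Real.sqrt ((x - a) * (b - x)) / (b - a) := by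
      have e1 : 1 - y ^ 2 = (2 / (b - a))^2 * ((x - a) * (b - x)) := by
        rw [hy]; field_simp; ring
      rw [e1, Real.sqrt_mul (sq_nonneg _), Real.sqrt_sq (by positivity : (0:ℝ) ≤ 2 / (b-a))]
      ring
    have hpos : 0 < Real.sqrt ((x - a) * (b - x)) := by
      apply Real.sqrt_pos.mpr
      have h1 : 0 < x - a := by linarith [hx.1]
      have h2 : 0 < b - x := by linarith [hx.2]
      positivity
    have hval : 1 / Real.sqrt (1 - y ^ 2) * (2 / (b - a)) = 1 / Real.sqrt ((x - a) * (b - x)) := by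
      rw [hsq]; field_simp
    rw [← hval]
    exact harc.hasDerivWithinAt
  have hint := aux_h_integrable hab
  rw [integral_eq_sub_of_hasDeriv_right_of_le hab.le hFcont hFderiv hint]
  have hFb : F b = Real.pi / 2 := by
    show Real.arcsin ((2 * b - (a + b)) / (b - a)) = Real.pi / 2
    have he : (2 * b - (a + b)) / (b - a) = 1 := by field_simp; ring
    rw [he, Real.arcsin_one]
  have hFa : F a = -(Real.pi / 2) := by
    show Real.arcsin ((2 * a - (a + b)) / (b - a)) = -(Real.pi / 2)
    have he : (2 * a - (a + b)) / (b - a) = -1 := by field_simp; ring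
    rw [he, Real.arcsin_neg_one]
  rw [hFa, hFb]; ring

open Set MeasureTheory intervalIntegral

section AuxMain

/-- pointwise band lemma -/
lemma aux_band {xmin xmax xadd y : ℝ} (h1 : 0 < xmin) (hlt : xmin < xmax) (h2 : xmax < 1)
    (h3 : 1 < xadd) (hy0 : 0 < y) (hy1 : y < 1)
    (hq : 0 ≤ y * ((y - xmin) * (y - xmax) * (y - xadd))) : xmin ≤ y ∧ y ≤ xmax := by
  constructor
  · by_contra h; push_neg at h
    have hA : 0 < xmin - y := by linarith
    have hB : 0 < xmax - y := by linarith
    have hC : 0 < xadd - y := by linarith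
    nlinarith [mul_pos (mul_pos (mul_pos hy0 hA) hB) hC]
  · by_contra h; push_neg at h
    have hA : 0 < y - xmin := by linarith
    have hB : 0 < y - xmax := by linarith
    have hC : 0 < xadd - y := by linarith
    nlinarith [mul_pos (mul_pos (mul_pos hy0 hA) hB) hC]

/-- sign constancy on an interval -/
lemma aux_sign_constOn {y : ℝ → ℝ} {a b : ℝ} (hc : Continuous y)
    (h0 : ∀ t ∈ Ioo a b, y t ≠ 0) :
    (∀ t ∈ Ioo a b, 0 < y t) ∨ (∀ t ∈ Ioo a b, y t < 0) := by
  by_contra h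
  push_neg at h
  obtain ⟨⟨t1, ht1, ht1'⟩, ⟨t2, ht2, ht2'⟩⟩ := h
  have h1 : y t1 < 0 := lt_of_le_of_ne ht1' (h0 t1 ht1)
  have h2 : 0 < y t2 := lt_of_le_of_ne ht2' (Ne.symm (h0 t2 ht2))
  have hsub : uIcc t1 t2 ⊆ Ioo a b := (ordConnected_Ioo).uIcc_subset ht1 ht2
  have hmem : (0:ℝ) ∈ uIcc (y t1) (y t2) := by
    rw [mem_uIcc]; left; exact ⟨h1.le, h2.le⟩
  obtain ⟨s, hs, hs0⟩ := intermediate_value_uIcc (hc.continuousOn) hmem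
  exact h0 s (hsub hs) hs0

/-- comparison: 1/√(Aχ) ≤ (1/√c)(1/√A) when c ≤ χ -/
lemma aux_inv_sqrt_le {A χ c : ℝ} (hA : 0 ≤ A) (hc : 0 < c) (hcχ : c ≤ χ) :
    1 / Real.sqrt (A * χ) ≤ (1 / Real.sqrt c) * (1 / Real.sqrt A) := by
  rcases eq_or_lt_of_le hA with h | hA'
  · rw [← h]; simp
  · have hχ : 0 < χ := lt_of_lt_of_le hc hcχ
    rw [Real.sqrt_mul hA χ, one_div, one_div, one_div, mul_inv, mul_comm ((Real.sqrt c)⁻¹)]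
    gcongr (Real.sqrt A)⁻¹ * ?_
    apply inv_anti₀ (Real.sqrt_pos.mpr hc)
    exact Real.sqrt_le_sqrt hcχ

/-- comparison: (1/√C)(1/√A) ≤ 1/√(Aχ) when 0 < χ ≤ C -/
lemma aux_inv_sqrt_ge {A χ C : ℝ} (hA : 0 ≤ A) (hχ : 0 < χ) (hχC : χ ≤ C) :
    (1 / Real.sqrt C) * (1 / Real.sqrt A) ≤ 1 / Real.sqrt (A * χ) := by
  have hC : 0 < C := lt_of_lt_of_le hχ hχC
  rcases eq_or_lt_of_le hA with h | hA'
  · rw [← h]; simp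
  · rw [Real.sqrt_mul hA χ, one_div, one_div, one_div, mul_inv, mul_comm ((Real.sqrt C)⁻¹)]
    gcongr (Real.sqrt A)⁻¹ * ?_
    apply inv_anti₀ (Real.sqrt_pos.mpr hχ)
    exact Real.sqrt_le_sqrt hχC

end AuxMain
set_option maxHeartbeats 1600000 in
lemma stage2 (z xmin xmax xadd : ℝ)
    (hz0 : 0 < z) (hz27 : z < 1/27)
    (hxmin0 : 0 < xmin) (hxmax1 : xmax < 1) (hlt : xmin < xmax) (hlt2 : xmax < xadd)
    (hr1 : xmin * (1 - xmin) ^ 2 = 4 * z) (hr2 : xmax * (1 - xmax) ^ 2 = 4 * z)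
    (hfac : ∀ x : ℝ, x^2*(1-x)^2 - 4*z*x = x * ((x - xmin)*(x - xmax)*(x - xadd)))
    (X : ℝ → ℝ × ℝ)
    (hlevel : ∀ t, (X t).1 * (X t).2 * (1 - (X t).1 - (X t).2) = z)
    (hode : ∀ t, HasDerivAt X (LV (X t)) t)
    (hXc : Continuous X)
    (hc1 : Continuous (fun t => (X t).1))
    (hc2 : Continuous (fun t => (X t).2))
    (hdu : ∀ t, HasDerivAt (fun s => (X s).1) ((X t).1 * (1 - (X t).1 - 2*(X t).2)) t)
    (hdv : ∀ t, HasDerivAt (fun s => (X s).2) ((X t).2 * (2*(X t).1 + (X t).2 - 1)) t)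
    (hdw : ∀ t, HasDerivAt (fun s => 1 - (X s).1 - (X s).2)
      ((1 - (X t).1 - (X t).2) * ((X t).2 - (X t).1)) t)
    (hsq1 : ∀ t, ((X t).1 * (1 - (X t).1 - 2*(X t).2))^2
      = ((X t).1)^2*(1-(X t).1)^2 - 4*z*((X t).1))
    (hband : ∀ t, (xmin ≤ (X t).1 ∧ (X t).1 ≤ xmax) ∧ (xmin ≤ (X t).2 ∧ (X t).2 ≤ xmax)
      ∧ (xmin ≤ 1 - (X t).1 - (X t).2 ∧ 1 - (X t).1 - (X t).2 ≤ xmax))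
    (hXball : ∀ t, X t ∈ Metric.closedBall (0:ℝ × ℝ) 1)
    (hball : ∀ p : ℝ × ℝ, (xmin ≤ p.1 ∧ p.1 ≤ xmax) → (xmin ≤ p.2 ∧ p.2 ≤ xmax) →
      p ∈ Metric.closedBall (0:ℝ × ℝ) 1)
    (P : ℝ) (hP : 0 < P) (hper : ∀ t, X (t + P) = X t)
    (hminper : ∀ q, 0 < q → (∀ t, X (t + q) = X t) → P ≤ q) :
    ∃ τ σ : ℝ, τ < σ ∧ P = 2*(σ - τ) ∧ (X τ).1 = xmin ∧ (X σ).1 = xmax ∧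
      (∀ t, t ∈ Ioo τ σ → xmin < (X t).1 ∧ (X t).1 < xmax) ∧
      (∀ t, t ∈ Ioo τ σ → 0 < (X t).1 * (1 - (X t).1 - 2*(X t).2)) := by
  -- values at critical points
  have hcrit : ∀ a, (X a).1 * (1 - (X a).1 - 2*(X a).2) = 0 →
      (X a).1 = xmin ∨ (X a).1 = xmax := by
    intro a ha
    have h := hsq1 a
    rw [ha] at h
    have h' : ((X a).1)^2*(1-(X a).1)^2 - 4*z*((X a).1) = 0 := by
      rw [← h]; ring
    rw [hfac ((X a).1)] at h'
    have hu0 : (X a).1 ≠ 0 := by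
      have := (hband a).1.1
      intro hh
      rw [hh] at this
      linarith
    rcases mul_eq_zero.mp h' with h3 | h3
    · exact absurd h3 hu0
    · rcases mul_eq_zero.mp h3 with h4 | h4
      · rcases mul_eq_zero.mp h4 with h5 | h5
        · left; exact sub_eq_zero.mp h5
        · right; exact sub_eq_zero.mp h5
      · exfalso
        have hle : (X a).1 ≤ xmax := (hband a).1.2
        have := sub_eq_zero.mp h4
        linarith
  -- point lemmas: critical points of the orbit are uniquely determined
  have hptmin : ∀ a, (X a).1 = xmin → X a = (xmin, (1-xmin)/2) := by
    intro a ha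
    have h := hsq1 a
    rw [ha] at h
    have hz' : xmin^2*(1-xmin)^2 - 4*z*xmin = 0 := by rw [hfac xmin]; ring
    rw [hz'] at h
    have h2 : xmin * (1 - xmin - 2*(X a).2) = 0 :=
      pow_eq_zero_iff (n := 2) (by norm_num) |>.mp h
    have h3 : 1 - xmin - 2*(X a).2 = 0 := by
      rcases mul_eq_zero.mp h2 with h | h
      · exact absurd h (by linarith)
      · exact h
    apply Prod.ext_iff.mpr
    exact ⟨ha, by simp only; linarith⟩
  have hptmax : ∀ a, (X a).1 = xmax → X a = (xmax, (1-xmax)/2) := by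
    intro a ha
    have h := hsq1 a
    rw [ha] at h
    have hz' : xmax^2*(1-xmax)^2 - 4*z*xmax = 0 := by rw [hfac xmax]; ring
    rw [hz'] at h
    have h2 : xmax * (1 - xmax - 2*(X a).2) = 0 :=
      pow_eq_zero_iff (n := 2) (by norm_num) |>.mp h
    have h3 : 1 - xmax - 2*(X a).2 = 0 := by
      rcases mul_eq_zero.mp h2 with h | h
      · exact absurd h (by linarith)
      · exact h
    apply Prod.ext_iff.mpr
    exact ⟨ha, by simp only; linarith⟩
  -- periodicity of the first coordinate
  have hperu : Function.Periodic (fun t => (X t).1) P := fun t => by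
    simp only; rw [hper t]
  -- a time with value xmin
  have hminattain : ∃ τ, (X τ).1 = xmin := by
    obtain ⟨τ0, hτ0mem, hτ0min⟩ := (isCompact_Icc (a := (0:ℝ)) (b := P)).exists_isMinOn
      ⟨0, by constructor <;> [exact le_refl 0; exact hP.le]⟩ hc1.continuousOn
    have hglobmin : ∀ s, (X τ0).1 ≤ (X s).1 := by
      intro s
      obtain ⟨y, hy, hys⟩ := hperu.exists_mem_Ico₀ hP s
      rw [show (X s).1 = (X y).1 from hys]
      exact hτ0min (Ico_subset_Icc_self hy)
    have hlocmin : IsLocalMin (fun t => (X t).1) τ0 :=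
      Filter.Eventually.of_forall fun s => hglobmin s
    have hder0 : (X τ0).1 * (1 - (X τ0).1 - 2*(X τ0).2) = 0 :=
      hlocmin.hasDerivAt_eq_zero (hdu τ0)
    rcases hcrit τ0 hder0 with h | h
    · exact ⟨τ0, h⟩
    · exfalso
      have hconstu : ∀ s, (X s).1 = xmax := by
        intro s
        have h1 := hglobmin s
        rw [h] at h1
        exact le_antisymm (hband s).1.2 h1
      have hconstv : ∀ s, (X s).2 = (1-xmax)/2 :=
        fun s => congrArg Prod.snd (hptmax s (hconstu s))
      have hvfun : (fun s => (X s).2) = fun _ => (1-xmax)/2 := funext hconstv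
      have hd0 := hdv 0
      rw [hvfun] at hd0
      have hval0 : (X 0).2 * (2*(X 0).1 + (X 0).2 - 1) = 0 :=
        hd0.unique (hasDerivAt_const 0 _)
      rw [hconstu 0, hconstv 0] at hval0
      rcases mul_eq_zero.mp hval0 with hh | hh
      · linarith
      · have hx3 : xmax = 1/3 := by linarith
        rw [hx3] at hr2
        norm_num at hr2
        linarith
  -- a time with value xmax
  have hmaxattain : ∃ σ, (X σ).1 = xmax := by
    obtain ⟨σ0, hσ0mem, hσ0max⟩ := (isCompact_Icc (a := (0:ℝ)) (b := P)).exists_isMaxOn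
      ⟨0, by constructor <;> [exact le_refl 0; exact hP.le]⟩ hc1.continuousOn
    have hglobmax : ∀ s, (X s).1 ≤ (X σ0).1 := by
      intro s
      obtain ⟨y, hy, hys⟩ := hperu.exists_mem_Ico₀ hP s
      rw [show (X s).1 = (X y).1 from hys]
      exact hσ0max (Ico_subset_Icc_self hy)
    have hlocmax : IsLocalMax (fun t => (X t).1) σ0 :=
      Filter.Eventually.of_forall fun s => hglobmax s
    have hder0 : (X σ0).1 * (1 - (X σ0).1 - 2*(X σ0).2) = 0 :=
      hlocmax.hasDerivAt_eq_zero (hdu σ0)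
    rcases hcrit σ0 hder0 with h | h
    · exfalso
      have hconstu : ∀ s, (X s).1 = xmin := by
        intro s
        have h1 := hglobmax s
        rw [h] at h1
        exact le_antisymm h1 (hband s).1.1
      have hconstv : ∀ s, (X s).2 = (1-xmin)/2 :=
        fun s => congrArg Prod.snd (hptmin s (hconstu s))
      have hvfun : (fun s => (X s).2) = fun _ => (1-xmin)/2 := funext hconstv
      have hd0 := hdv 0
      rw [hvfun] at hd0
      have hval0 : (X 0).2 * (2*(X 0).1 + (X 0).2 - 1) = 0 :=
        hd0.unique (hasDerivAt_const 0 _)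
      rw [hconstu 0, hconstv 0] at hval0
      rcases mul_eq_zero.mp hval0 with hh | hh
      · linarith
      · have hx3 : xmin = 1/3 := by linarith
        rw [hx3] at hr1
        norm_num at hr1
        linarith
    · exact ⟨σ0, h⟩
  obtain ⟨τ, hτval⟩ := hminattain
  obtain ⟨σ1, hσ1val⟩ := hmaxattain
  -- time shifts of solutions are solutions; equal values force periods
  have hshiftode : ∀ c : ℝ, ∀ s : ℝ, HasDerivAt (fun r => X (r + c)) (LV (X (s + c))) s := by
    intro c s
    have hinner : HasDerivAt (fun r : ℝ => r + c) 1 s := (hasDerivAt_id s).add_const c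
    have h := (hode (s + c)).scomp s hinner
    simpa [Function.comp_def] using h
  have hXeq : ∀ a b, X a = X b → ∀ t, X (t + (b - a)) = X t := by
    intro a b hab
    exact aux_uniq (F := fun r => X (r + (b - a))) (G := X)
      (fun s => hshiftode (b - a) s)
      hode (fun s => hXball (s + (b - a))) hXball (t₀ := a)
      (by show X (a + (b - a)) = X a; rw [show a + (b - a) = b by ring]; exact hab.symm)
  have hperge : ∀ a b, a < b → X a = X b → P ≤ b - a := fun a b hab heq =>
    hminper _ (by linarith) (hXeq a b heq)
  -- reflection symmetry at a symmetric point
  have hrefl : ∀ a, (X a).2 = 1 - (X a).1 - (X a).2 →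
      ∀ t, ((X (2*a - t)).1, 1 - (X (2*a - t)).1 - (X (2*a - t)).2) = X t := by
    intro a hsym
    apply aux_uniq (F := fun t => ((X (2*a - t)).1, 1 - (X (2*a - t)).1 - (X (2*a - t)).2))
      (G := X) _ hode _ hXball (t₀ := a) _
    · intro t
      have hinner : HasDerivAt (fun t : ℝ => 2*a - t) (-1) t := by
        simpa using (hasDerivAt_id' t).const_sub (2*a)
      have h1 : HasDerivAt (fun t => (X (2*a - t)).1)
          (((X (2*a-t)).1 * (1 - (X (2*a-t)).1 - 2*(X (2*a-t)).2)) * (-1)) t :=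
        (hdu (2*a - t)).comp t hinner
      have h2 : HasDerivAt (fun t => 1 - (X (2*a - t)).1 - (X (2*a - t)).2)
          (((1 - (X (2*a-t)).1 - (X (2*a-t)).2) * ((X (2*a-t)).2 - (X (2*a-t)).1)) * (-1)) t :=
        (hdw (2*a - t)).comp t hinner
      have hp := h1.prodMk h2
      convert hp using 1
      simp only [LV]
      apply Prod.ext_iff.mpr
      constructor
      · simp only
        ring
      · simp only
        ring
    · intro t
      exact hball _ ⟨(hband _).1.1, (hband _).1.2⟩ ⟨(hband _).2.2.1, (hband _).2.2.2⟩
    · show ((X (2*a - a)).1, 1 - (X (2*a - a)).1 - (X (2*a - a)).2) = X a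
      rw [show 2*a - a = a by ring]
      exact Prod.ext_iff.mpr ⟨rfl, hsym.symm⟩
  -- σ in the fundamental window
  obtain ⟨σ, hσmem, hσval⟩ := hperu.exists_mem_Ico hP σ1 τ
  have hσval' : (X σ).1 = xmax := by
    rw [show (X σ).1 = (X σ1).1 from hσval.symm, hσ1val]
  have hτσ : τ < σ := by
    rcases lt_or_eq_of_le hσmem.1 with h | h
    · exact h
    · exfalso
      rw [← h] at hσval'
      rw [hτval] at hσval'
      linarith
  -- symmetric points
  have hsymτ : (X τ).2 = 1 - (X τ).1 - (X τ).2 := by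
    have hA := hptmin τ hτval
    have h2 : (X τ).2 = (1-xmin)/2 := congrArg Prod.snd hA
    rw [h2, hτval]
    ring
  have hsymσ : (X σ).2 = 1 - (X σ).1 - (X σ).2 := by
    have hA := hptmax σ hσval'
    have h2 : (X σ).2 = (1-xmax)/2 := congrArg Prod.snd hA
    rw [h2, hσval']
    ring
  have hττ := hrefl τ hsymτ
  have hσσ := hrefl σ hsymσ
  have hXeq2 : ∀ t, X (2*τ - t) = X (2*σ - t) := by
    intro t
    have e := (hττ t).trans (hσσ t).symm
    rw [Prod.mk.injEq] at e
    obtain ⟨e1, e2⟩ := e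
    exact Prod.ext_iff.mpr ⟨e1, by linarith⟩
  have hshift2 : ∀ s, X (s + 2*(σ - τ)) = X s := by
    intro s
    have h := hXeq2 (2*τ - s)
    rw [show 2*τ - (2*τ - s) = s by ring, show 2*σ - (2*τ - s) = s + 2*(σ - τ) by ring] at h
    exact h.symm
  have hPle : P ≤ 2*(σ - τ) := hminper _ (by linarith) hshift2
  have hPeq : P = 2*(σ - τ) := by
    by_contra hne
    have hlt' : P < 2*(σ - τ) := lt_of_le_of_ne hPle hne
    have hXa : X (τ + P) = X (2*σ - τ) := by
      rw [hper τ]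
      have h := hXeq2 τ
      rw [show 2*τ - τ = τ by ring] at h
      exact h
    have hlt2' : τ + P < 2*σ - τ := by linarith
    have hge := hperge (τ + P) (2*σ - τ) hlt2' hXa
    have hσP : σ < τ + P := hσmem.2
    linarith
  -- strict band on the open interval
  have hIoo : ∀ t, t ∈ Ioo τ σ → xmin < (X t).1 ∧ (X t).1 < xmax := by
    intro t ht
    constructor
    · rcases lt_or_eq_of_le (hband t).1.1 with h | h
      · exact h
      · exfalso
        have hXt : X τ = X t := by rw [hptmin t h.symm, hptmin τ hτval]
        have hge := hperge τ t ht.1 hXt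
        have hσP : σ < τ + P := hσmem.2
        have ht2 := ht.2
        linarith
    · rcases lt_or_eq_of_le (hband t).1.2 with h | h
      · exact h
      · exfalso
        have hXt : X t = X σ := by rw [hptmax t h, hptmax σ hσval']
        have hge := hperge t σ ht.2 hXt
        have ht1 := ht.1
        linarith
  -- positivity of the derivative of the first coordinate on (τ, σ)
  have hgpos : ∀ y, xmin < y → y < xmax → 0 < y^2*(1-y)^2 - 4*z*y := by
    intro y hy1 hy2
    rw [hfac y]
    have hy0 : 0 < y := by linarith
    have hA : 0 < y - xmin := by linarith
    have hB : 0 < xmax - y := by linarith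
    have hC : 0 < xadd - y := by linarith
    nlinarith [mul_pos (mul_pos (mul_pos hy0 hA) hB) hC]
  have hDc : Continuous (fun t => (X t).1 * (1 - (X t).1 - 2*(X t).2)) := by
    apply hc1.mul
    exact (continuous_const.sub hc1).sub (continuous_const.mul hc2)
  have hDne : ∀ t ∈ Ioo τ σ, (X t).1 * (1 - (X t).1 - 2*(X t).2) ≠ 0 := by
    intro t ht h0
    have h := hsq1 t
    rw [h0] at h
    have hg := hgpos ((X t).1) (hIoo t ht).1 (hIoo t ht).2
    rw [← h] at hg
    simp at hg
  rcases aux_sign_constOn hDc hDne with hpos | hneg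
  · exact ⟨τ, σ, hτσ, hPeq, hτval, hσval', hIoo, hpos⟩
  · exfalso
    have hanti : StrictAntiOn (fun t => (X t).1) (Icc τ σ) := by
      apply strictAntiOn_of_deriv_neg (convex_Icc τ σ) hc1.continuousOn
      intro t ht
      rw [interior_Icc] at ht
      rw [(hdu t).deriv]
      exact hneg t ht
    have h2 : (X σ).1 < (X τ).1 :=
      hanti (left_mem_Icc.mpr hτσ.le) (right_mem_Icc.mpr hτσ.le) hτσ
    rw [hτval, hσval'] at h2
    linarith

set_option maxHeartbeats 1600000 in
lemma stage3 (z xmin xmax xadd : ℝ)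
    (hz0 : 0 < z) (hxmin0 : 0 < xmin) (hxmax1 : xmax < 1) (hlt : xmin < xmax)
    (hlt2 : xmax < xadd)
    (hfac : ∀ x : ℝ, x^2*(1-x)^2 - 4*z*x = x * ((x - xmin)*(x - xmax)*(x - xadd)))
    (X : ℝ → ℝ × ℝ)
    (hc1 : Continuous (fun t => (X t).1))
    (hdu : ∀ t, HasDerivAt (fun s => (X s).1) ((X t).1 * (1 - (X t).1 - 2*(X t).2)) t)
    (hsq1 : ∀ t, ((X t).1 * (1 - (X t).1 - 2*(X t).2))^2
      = ((X t).1)^2*(1-(X t).1)^2 - 4*z*((X t).1))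
    (hband1 : ∀ t, xmin ≤ (X t).1 ∧ (X t).1 ≤ xmax)
    (P : ℝ) (hP : 0 < P)
    (τ σ : ℝ) (hτσ : τ < σ) (hPeq : P = 2*(σ - τ))
    (hτval : (X τ).1 = xmin) (hσval : (X σ).1 = xmax)
    (hIoo : ∀ t, t ∈ Ioo τ σ → xmin < (X t).1 ∧ (X t).1 < xmax)
    (hdpos : ∀ t, t ∈ Ioo τ σ → 0 < (X t).1 * (1 - (X t).1 - 2*(X t).2)) :
    P = 2 * ∫ x in xmin..xmax, 1 / Real.sqrt (x ^ 2 * (1 - x) ^ 2 - 4 * z * x) ∧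
    2 / Real.sqrt (sSup ((fun x => (xadd - x) * x) '' Ioo xmin xmax)) * Real.pi ≤ P ∧
    P ≤ 2 / Real.sqrt (sInf ((fun x => (xadd - x) * x) '' Ioo xmin xmax)) * Real.pi := by
  have hxadd1 : xmin < xadd := lt_trans hlt hlt2
  have hgpos : ∀ y, xmin < y → y < xmax → 0 < y^2*(1-y)^2 - 4*z*y := by
    intro y hy1 hy2
    rw [hfac y]
    have hy0 : 0 < y := by linarith
    have hA : 0 < y - xmin := by linarith
    have hB : 0 < xmax - y := by linarith
    have hC : 0 < xadd - y := by linarith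
    nlinarith [mul_pos (mul_pos (mul_pos hy0 hA) hB) hC]
  have hgid : ∀ x : ℝ, x^2*(1-x)^2 - 4*z*x = ((x - xmin)*(xmax - x)) * ((xadd - x)*x) := by
    intro x
    linear_combination hfac x
  have hfmeas : Measurable (fun x : ℝ => 1 / Real.sqrt (x^2*(1-x)^2 - 4*z*x)) := by
    apply Measurable.div measurable_const
    exact (Real.continuous_sqrt.comp (by continuity)).measurable
  set m₀ : ℝ := (xadd - xmax)*xmin with hm₀def
  have hm₀ : 0 < m₀ := mul_pos (by linarith) hxmin0
  have hχlb : ∀ x, xmin ≤ x → x ≤ xmax → m₀ ≤ (xadd - x)*x := by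
    intro x h1 h2
    rw [hm₀def]
    apply mul_le_mul (by linarith) h1 (by linarith) (by linarith)
  have hχub : ∀ x, xmin ≤ x → x ≤ xmax → (xadd - x)*x ≤ xadd*xmax := by
    intro x h1 h2
    apply mul_le_mul (by linarith) h2 (by linarith) (by linarith)
  -- integrability
  have hintf : IntervalIntegrable (fun x => 1 / Real.sqrt (x^2*(1-x)^2 - 4*z*x))
      volume xmin xmax := by
    apply IntervalIntegrable.mono_fun'
      ((aux_h_integrable hlt).const_mul (1 / Real.sqrt m₀)) hfmeas.aestronglyMeasurable
    rw [uIoc_of_le hlt.le, Filter.EventuallyLE, ae_restrict_iff' measurableSet_Ioc]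
    apply ae_of_all
    intro x hx
    have h1 : xmin ≤ x := hx.1.le
    have h2 : x ≤ xmax := hx.2
    rw [Real.norm_eq_abs, abs_of_nonneg (by positivity)]
    rw [hgid x]
    have hA : 0 ≤ (x - xmin)*(xmax - x) := mul_nonneg (by linarith) (by linarith)
    exact aux_inv_sqrt_le hA hm₀ (hχlb x h1 h2)
  -- the primitive of f
  have hFint : IntegrableOn (fun x => 1 / Real.sqrt (x^2*(1-x)^2 - 4*z*x))
      (uIcc xmin xmax) volume := by
    rw [uIcc_of_le hlt.le, integrableOn_Icc_iff_integrableOn_Ioc]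
    exact (intervalIntegrable_iff_integrableOn_Ioc_of_le hlt.le).mp hintf
  have hFcont : ContinuousOn
      (fun y => ∫ x in xmin..y, 1 / Real.sqrt (x^2*(1-x)^2 - 4*z*x)) (Icc xmin xmax) := by
    have h := intervalIntegral.continuousOn_primitive_interval hFint
    rwa [uIcc_of_le hlt.le] at h
  have hFderiv : ∀ y ∈ Ioo xmin xmax,
      HasDerivAt (fun w => ∫ x in xmin..w, 1 / Real.sqrt (x^2*(1-x)^2 - 4*z*x))
        (1 / Real.sqrt (y^2*(1-y)^2 - 4*z*y)) y := by
    intro y hy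
    apply intervalIntegral.integral_hasDerivAt_right
    · apply hintf.mono_set
      rw [uIcc_of_le hlt.le, uIcc_of_le hy.1.le]
      exact Icc_subset_Icc (le_refl _) hy.2.le
    · exact ⟨univ, Filter.univ_mem, hfmeas.aestronglyMeasurable⟩
    · have hg := hgpos y hy.1 hy.2
      apply ContinuousAt.div continuousAt_const
      · exact (Real.continuous_sqrt.comp (by continuity)).continuousAt
      · exact ne_of_gt (Real.sqrt_pos.mpr hg)
  -- the auxiliary function ψ has vanishing derivative on (τ, σ)
  have husub : ∀ t, t ∈ Ioo τ σ → (X t).1 ∈ Ioo xmin xmax :=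
    fun t ht => ⟨(hIoo t ht).1, (hIoo t ht).2⟩
  have hueq : ∀ t ∈ Ioo τ σ, (X t).1 * (1 - (X t).1 - 2*(X t).2)
      = Real.sqrt (((X t).1)^2*(1-(X t).1)^2 - 4*z*((X t).1)) := by
    intro t ht
    rw [← hsq1 t, Real.sqrt_sq (hdpos t ht).le]
  have hψderiv : ∀ t ∈ Ioo τ σ,
      HasDerivAt (fun r => (∫ x in xmin..(X r).1,
        1 / Real.sqrt (x^2*(1-x)^2 - 4*z*x)) - (r - τ)) 0 t := by
    intro t ht
    have hcomp := (hFderiv ((X t).1) (husub t ht)).comp t (hdu t)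
    have hid : HasDerivAt (fun r : ℝ => r - τ) 1 t := (hasDerivAt_id t).sub_const τ
    have h := hcomp.sub hid
    refine h.congr_deriv ?_
    have hg := hgpos ((X t).1) (husub t ht).1 (husub t ht).2
    rw [hueq t ht, one_div, inv_mul_cancel₀ (ne_of_gt (Real.sqrt_pos.mpr hg))]
    norm_num
  -- ψ is constant on (τ, σ)
  have hψeq : ∀ s t, s ∈ Ioo τ σ → t ∈ Ioo τ σ → s < t →
      ((∫ x in xmin..(X s).1, 1 / Real.sqrt (x^2*(1-x)^2 - 4*z*x)) - (s - τ))
      = ((∫ x in xmin..(X t).1, 1 / Real.sqrt (x^2*(1-x)^2 - 4*z*x)) - (t - τ)) := by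
    intro s t hs ht hst
    have hsub : Icc s t ⊆ Ioo τ σ := fun r hr => ⟨lt_of_lt_of_le hs.1 hr.1,
      lt_of_le_of_lt hr.2 ht.2⟩
    obtain ⟨c, _, hc⟩ := exists_hasDerivAt_eq_slope
      (fun r => (∫ x in xmin..(X r).1, 1 / Real.sqrt (x^2*(1-x)^2 - 4*z*x)) - (r - τ))
      (fun _ => 0) hst
      (fun r hr => (hψderiv r (hsub hr)).continuousAt.continuousWithinAt)
      (fun r hr => hψderiv r (hsub (Ioo_subset_Icc_self hr)))
    have h0 := hc.symm
    rw [div_eq_zero_iff] at h0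
    rcases h0 with h0 | h0
    · linarith [sub_eq_zero.mp h0]
    · exfalso; exact (sub_ne_zero.mpr (ne_of_gt hst)) h0
  -- continuity of ψ on [τ, σ] and endpoint values
  have hmaps : MapsTo (fun t => (X t).1) (Icc τ σ) (Icc xmin xmax) :=
    fun t _ => ⟨(hband1 t).1, (hband1 t).2⟩
  have hψcont : ContinuousOn (fun r => (∫ x in xmin..(X r).1,
      1 / Real.sqrt (x^2*(1-x)^2 - 4*z*x)) - (r - τ)) (Icc τ σ) := by
    apply ContinuousOn.sub
    · exact hFcont.comp hc1.continuousOn hmaps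
    · exact (continuous_id.sub continuous_const).continuousOn
  set mid : ℝ := (τ + σ)/2 with hmiddef
  have hmid : mid ∈ Ioo τ σ := by
    constructor <;> [skip; skip] <;> rw [hmiddef] <;> linarith
  have hconst_on : ∀ t, t ∈ Ioo τ σ →
      ((∫ x in xmin..(X t).1, 1 / Real.sqrt (x^2*(1-x)^2 - 4*z*x)) - (t - τ))
      = ((∫ x in xmin..(X mid).1, 1 / Real.sqrt (x^2*(1-x)^2 - 4*z*x)) - (mid - τ)) := by
    intro t ht
    rcases lt_trichotomy t mid with h | h | h
    · exact hψeq t mid ht hmid h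
    · rw [h]
    · exact (hψeq mid t hmid ht h).symm
  have hlim : ∀ a, a ∈ Icc τ σ → a ∈ closure (Ioo τ σ) →
      ((∫ x in xmin..(X a).1, 1 / Real.sqrt (x^2*(1-x)^2 - 4*z*x)) - (a - τ))
      = ((∫ x in xmin..(X mid).1, 1 / Real.sqrt (x^2*(1-x)^2 - 4*z*x)) - (mid - τ)) := by
    intro a haI hac
    haveI hnb : (nhdsWithin a (Ioo τ σ)).NeBot := mem_closure_iff_nhdsWithin_neBot.mp hac
    have h1 : Filter.Tendsto (fun r => (∫ x in xmin..(X r).1,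
        1 / Real.sqrt (x^2*(1-x)^2 - 4*z*x)) - (r - τ)) (nhdsWithin a (Ioo τ σ))
        (nhds ((∫ x in xmin..(X a).1, 1 / Real.sqrt (x^2*(1-x)^2 - 4*z*x)) - (a - τ))) :=
      (hψcont a haI).mono_left (nhdsWithin_mono a Ioo_subset_Icc_self)
    have h2 : Filter.Tendsto (fun r => (∫ x in xmin..(X r).1,
        1 / Real.sqrt (x^2*(1-x)^2 - 4*z*x)) - (r - τ)) (nhdsWithin a (Ioo τ σ))
        (nhds ((∫ x in xmin..(X mid).1, 1 / Real.sqrt (x^2*(1-x)^2 - 4*z*x)) - (mid - τ))) := by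
      apply Filter.Tendsto.congr' _ tendsto_const_nhds
      exact eventually_mem_nhdsWithin.mono fun x hx => (hconst_on x hx).symm
    exact tendsto_nhds_unique h1 h2
  have hcl : closure (Ioo τ σ) = Icc τ σ := closure_Ioo (ne_of_lt hτσ)
  have hψτ := hlim τ (left_mem_Icc.mpr hτσ.le) (by rw [hcl]; exact left_mem_Icc.mpr hτσ.le)
  have hψσ := hlim σ (right_mem_Icc.mpr hτσ.le) (by rw [hcl]; exact right_mem_Icc.mpr hτσ.le)
  rw [hτval, intervalIntegral.integral_same] at hψτ
  rw [hσval] at hψσ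
  have hkey : (∫ x in xmin..xmax, 1 / Real.sqrt (x^2*(1-x)^2 - 4*z*x)) = σ - τ := by
    have h2 := hψσ.trans hψτ.symm
    linarith
  have hconj1 : P = 2 * ∫ x in xmin..xmax, 1 / Real.sqrt (x^2*(1-x)^2 - 4*z*x) := by
    rw [hkey, hPeq]
  -- ### the bounds
  set mid2 : ℝ := (xmin + xmax)/2 with hmid2def
  have hmid2 : mid2 ∈ Ioo xmin xmax := by
    constructor <;> [skip; skip] <;> rw [hmid2def] <;> linarith
  have hnonempty : ((fun x => (xadd - x) * x) '' Ioo xmin xmax).Nonempty :=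
    ⟨_, mem_image_of_mem _ hmid2⟩
  have hbddb : BddBelow ((fun x => (xadd - x) * x) '' Ioo xmin xmax) := by
    refine ⟨m₀, fun y hy => ?_⟩
    obtain ⟨x, hx, rfl⟩ := hy
    exact hχlb x hx.1.le hx.2.le
  have hbdda : BddAbove ((fun x => (xadd - x) * x) '' Ioo xmin xmax) := by
    refine ⟨xadd*xmax, fun y hy => ?_⟩
    obtain ⟨x, hx, rfl⟩ := hy
    exact hχub x hx.1.le hx.2.le
  have hI_lb : m₀ ≤ sInf ((fun x => (xadd - x) * x) '' Ioo xmin xmax) := by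
    apply le_csInf hnonempty
    intro y hy
    obtain ⟨x, hx, rfl⟩ := hy
    exact hχlb x hx.1.le hx.2.le
  have hI_pos : 0 < sInf ((fun x => (xadd - x) * x) '' Ioo xmin xmax) :=
    lt_of_lt_of_le hm₀ hI_lb
  have hS_pos : 0 < sSup ((fun x => (xadd - x) * x) '' Ioo xmin xmax) := by
    have h1 := le_csSup hbdda (mem_image_of_mem _ hmid2)
    have h2 := hχlb mid2 hmid2.1.le hmid2.2.le
    linarith
  have hIle : ∀ x, x ∈ Ioo xmin xmax →
      sInf ((fun x => (xadd - x) * x) '' Ioo xmin xmax) ≤ (xadd - x)*x :=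
    fun x hx => csInf_le hbddb (mem_image_of_mem _ hx)
  have hSge : ∀ x, x ∈ Ioo xmin xmax →
      (xadd - x)*x ≤ sSup ((fun x => (xadd - x) * x) '' Ioo xmin xmax) :=
    fun x hx => le_csSup hbdda (mem_image_of_mem _ hx)
  -- upper bound for the integrand
  have hle1 : ∀ x ∈ Icc xmin xmax, 1 / Real.sqrt (x^2*(1-x)^2 - 4*z*x)
      ≤ (1 / Real.sqrt (sInf ((fun x => (xadd - x) * x) '' Ioo xmin xmax)))
        * (1 / Real.sqrt ((x - xmin)*(xmax - x))) := by
    intro x hx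
    rw [hgid x]
    rcases eq_or_lt_of_le hx.1 with he | h1
    · have hz' : (x - xmin)*(xmax - x) = 0 := by rw [← he]; ring
      rw [hz', zero_mul, Real.sqrt_zero, div_zero]
      positivity
    · rcases eq_or_lt_of_le hx.2 with he2 | h2
      · have hz' : (x - xmin)*(xmax - x) = 0 := by rw [he2]; ring
        rw [hz', zero_mul, Real.sqrt_zero, div_zero]
        positivity
      · have hA : 0 ≤ (x - xmin)*(xmax - x) := mul_nonneg (by linarith) (by linarith)
        exact aux_inv_sqrt_le hA hI_pos (hIle x ⟨h1, h2⟩)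
  -- lower bound for the integrand
  have hge1 : ∀ x ∈ Icc xmin xmax,
      (1 / Real.sqrt (sSup ((fun x => (xadd - x) * x) '' Ioo xmin xmax)))
        * (1 / Real.sqrt ((x - xmin)*(xmax - x)))
      ≤ 1 / Real.sqrt (x^2*(1-x)^2 - 4*z*x) := by
    intro x hx
    rw [hgid x]
    rcases eq_or_lt_of_le hx.1 with he | h1
    · have hz' : (x - xmin)*(xmax - x) = 0 := by rw [← he]; ring
      rw [hz', Real.sqrt_zero, div_zero, mul_zero]
      positivity
    · rcases eq_or_lt_of_le hx.2 with he2 | h2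
      · have hz' : (x - xmin)*(xmax - x) = 0 := by rw [he2]; ring
        rw [hz', Real.sqrt_zero, div_zero, mul_zero]
        positivity
      · have hA : 0 ≤ (x - xmin)*(xmax - x) := mul_nonneg (by linarith) (by linarith)
        have hχpos : 0 < (xadd - x)*x := lt_of_lt_of_le hm₀ (hχlb x h1.le h2.le)
        exact aux_inv_sqrt_ge hA hχpos (hSge x ⟨h1, h2⟩)
  have hinth := aux_h_integrable hlt
  have hupper : (∫ x in xmin..xmax, 1 / Real.sqrt (x^2*(1-x)^2 - 4*z*x))
      ≤ (1 / Real.sqrt (sInf ((fun x => (xadd - x) * x) '' Ioo xmin xmax))) * Real.pi := by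
    have h := intervalIntegral.integral_mono_on hlt.le hintf
      (hinth.const_mul (1 / Real.sqrt (sInf ((fun x => (xadd - x) * x) '' Ioo xmin xmax))))
      hle1
    rwa [intervalIntegral.integral_const_mul, aux_h_integral hlt] at h
  have hlower : (1 / Real.sqrt (sSup ((fun x => (xadd - x) * x) '' Ioo xmin xmax))) * Real.pi
      ≤ ∫ x in xmin..xmax, 1 / Real.sqrt (x^2*(1-x)^2 - 4*z*x) := by
    have h := intervalIntegral.integral_mono_on hlt.le
      (hinth.const_mul (1 / Real.sqrt (sSup ((fun x => (xadd - x) * x) '' Ioo xmin xmax))))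
      hintf hge1
    rwa [intervalIntegral.integral_const_mul, aux_h_integral hlt] at h
  refine ⟨by convert hconj1 using 3, ?_, ?_⟩
  · rw [hconj1]
    have : 2 / Real.sqrt (sSup ((fun x => (xadd - x) * x) '' Ioo xmin xmax)) * Real.pi
        = 2 * ((1 / Real.sqrt (sSup ((fun x => (xadd - x) * x) '' Ioo xmin xmax))) * Real.pi) := by
      ring
    rw [this]
    linarith
  · rw [hconj1]
    have : 2 / Real.sqrt (sInf ((fun x => (xadd - x) * x) '' Ioo xmin xmax)) * Real.pi
        = 2 * ((1 / Real.sqrt (sInf ((fun x => (xadd - x) * x) '' Ioo xmin xmax))) * Real.pi) := by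
      ring
    rw [this]
    linarith


set_option maxHeartbeats 1600000 in

/-- the (minimal) period of the closed orbit on the level set
{x₁x₂x₃ = z} equals T(z) = 2∫_{xmin}^{xmax} dx/√(x²(1-x)² - 4zx), and this
quantity is bounded between (2/√χ̄)π and (2/√χ̲)π, with χ̲, χ̄ the min and max
of x ↦ (x^add - x)x over (xmin, xmax). -/
theorem stmt_9 (z : ℝ) (hz : z ∈ Ioo (0:ℝ) (1 / 27))
    (xmin xmax xadd : ℝ) (h1 : xmin ∈ Ioo (0:ℝ) 1) (h2 : xmax ∈ Ioo (0:ℝ) 1)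
    (hlt : xmin < xmax) (hlt2 : xmax < xadd)
    (hr1 : xmin * (1 - xmin) ^ 2 = 4 * z) (hr2 : xmax * (1 - xmax) ^ 2 = 4 * z)
    (hr3 : xadd * (1 - xadd) ^ 2 = 4 * z)
    (X : ℝ → ℝ × ℝ) (hode : ∀ t, HasDerivAt X (LV (X t)) t)
    (hlevel : ∀ t, (X t).1 * (X t).2 * (1 - (X t).1 - (X t).2) = z)
    (P : ℝ) (hP : 0 < P) (hper : ∀ t, X (t + P) = X t)
    (hminper : ∀ q, 0 < q → (∀ t, X (t + q) = X t) → P ≤ q) :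
    P = 2 * ∫ x in xmin..xmax, 1 / Real.sqrt (x ^ 2 * (1 - x) ^ 2 - 4 * z * x) ∧
    2 / Real.sqrt (sSup ((fun x => (xadd - x) * x) '' Ioo xmin xmax)) * Real.pi ≤ P ∧
    P ≤ 2 / Real.sqrt (sInf ((fun x => (xadd - x) * x) '' Ioo xmin xmax)) * Real.pi := by
  obtain ⟨hz0, hz27⟩ := hz
  obtain ⟨hxmin0, hxmin1⟩ := h1
  obtain ⟨hxmax0, hxmax1⟩ := h2
  -- ### Vieta identities
  have e12 : xmin^2 + xmin*xmax + xmax^2 - 2*(xmin+xmax) + 1 = 0 := by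
    have h12 : (xmin - xmax) * (xmin^2 + xmin*xmax + xmax^2 - 2*(xmin+xmax) + 1) = 0 := by
      linear_combination hr1 - hr2
    rcases mul_eq_zero.mp h12 with h | h
    · exact absurd h (sub_ne_zero.mpr (ne_of_lt hlt))
    · exact h
  have e23 : xmax^2 + xmax*xadd + xadd^2 - 2*(xmax+xadd) + 1 = 0 := by
    have h23 : (xmax - xadd) * (xmax^2 + xmax*xadd + xadd^2 - 2*(xmax+xadd) + 1) = 0 := by
      linear_combination hr2 - hr3
    rcases mul_eq_zero.mp h23 with h | h
    · exact absurd h (sub_ne_zero.mpr (ne_of_lt hlt2))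
    · exact h
  have hsum : xmin + xmax + xadd = 2 := by
    have key : (xmin - xadd) * (xmin + xmax + xadd - 2) = 0 := by
      linear_combination e12 - e23
    rcases mul_eq_zero.mp key with h | h
    · exact absurd h (sub_ne_zero.mpr (ne_of_lt (lt_trans hlt hlt2)))
    · linarith
  have e2 : xmin*xmax + xmin*xadd + xmax*xadd = 1 := by
    linear_combination (xmin + xmax) * hsum - e12
  have e3 : xmin*xmax*xadd = 4*z := by
    linear_combination hr1 - xmin^2 * hsum + xmin * e2
  have hfac : ∀ x : ℝ, x^2*(1-x)^2 - 4*z*x = x * ((x - xmin)*(x - xmax)*(x - xadd)) := by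
    intro x
    linear_combination x^3*hsum - x^2*e2 + x*e3
  have hxadd1 : (1:ℝ) < xadd := by
    by_contra hle
    push_neg at hle
    have h := hfac 1
    nlinarith [mul_nonneg (mul_pos (sub_pos.mpr hxmin1) (sub_pos.mpr hxmax1)).le
      (sub_nonneg.mpr hle)]
  -- ### continuity and componentwise derivatives
  have hXc : Continuous X := continuous_iff_continuousAt.mpr fun t => (hode t).continuousAt
  have hc1 : Continuous (fun t => (X t).1) := continuous_fst.comp hXc
  have hc2 : Continuous (fun t => (X t).2) := continuous_snd.comp hXc
  have hdu : ∀ t, HasDerivAt (fun s => (X s).1)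
      ((X t).1 * (1 - (X t).1 - 2*(X t).2)) t := by
    intro t
    have h := ((ContinuousLinearMap.fst ℝ ℝ ℝ).hasFDerivAt
        (x := X t)).comp_hasDerivAt t (hode t)
    simpa [LV, Function.comp_def] using h
  have hdv : ∀ t, HasDerivAt (fun s => (X s).2)
      ((X t).2 * (2*(X t).1 + (X t).2 - 1)) t := by
    intro t
    have h := ((ContinuousLinearMap.snd ℝ ℝ ℝ).hasFDerivAt
        (x := X t)).comp_hasDerivAt t (hode t)
    simpa [LV, Function.comp_def] using h
  have hdw : ∀ t, HasDerivAt (fun s => 1 - (X s).1 - (X s).2)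
      ((1 - (X t).1 - (X t).2) * ((X t).2 - (X t).1)) t := by
    intro t
    have h := ((hasDerivAt_const t (1:ℝ)).sub (hdu t)).sub (hdv t)
    refine h.congr_deriv ?_
    ring
  -- ### nonvanishing of the coordinates
  have hne1 : ∀ t, (X t).1 ≠ 0 := by
    intro t h
    have := hlevel t
    rw [h] at this
    simp at this
    exact (ne_of_gt hz0) this.symm
  have hne2 : ∀ t, (X t).2 ≠ 0 := by
    intro t h
    have := hlevel t
    rw [h] at this
    simp at this
    exact (ne_of_gt hz0) this.symm
  have hne3 : ∀ t, 1 - (X t).1 - (X t).2 ≠ 0 := by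
    intro t h
    have := hlevel t
    rw [h] at this
    simp at this
    exact (ne_of_gt hz0) this.symm
  -- ### squared-derivative identities, nonnegativity of quartic
  have hsq1 : ∀ t, ((X t).1 * (1 - (X t).1 - 2*(X t).2))^2
      = ((X t).1)^2*(1-(X t).1)^2 - 4*z*((X t).1) := by
    intro t
    linear_combination (-4*(X t).1) * hlevel t
  have hsq2 : ∀ t, ((X t).2 * (2*(X t).1 + (X t).2 - 1))^2
      = ((X t).2)^2*(1-(X t).2)^2 - 4*z*((X t).2) := by
    intro t
    linear_combination (-4*(X t).2) * hlevel t
  have hsq3 : ∀ t, ((1 - (X t).1 - (X t).2) * ((X t).2 - (X t).1))^2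
      = (1 - (X t).1 - (X t).2)^2*(1-(1 - (X t).1 - (X t).2))^2
        - 4*z*(1 - (X t).1 - (X t).2) := by
    intro t
    linear_combination (-4*(1 - (X t).1 - (X t).2)) * hlevel t
  have hq1 : ∀ t, 0 ≤ (X t).1 * (((X t).1 - xmin) * ((X t).1 - xmax) * ((X t).1 - xadd)) := by
    intro t
    have h := hsq1 t
    have h2 := hfac ((X t).1)
    linarith [sq_nonneg ((X t).1 * (1 - (X t).1 - 2*(X t).2))]
  have hq2 : ∀ t, 0 ≤ (X t).2 * (((X t).2 - xmin) * ((X t).2 - xmax) * ((X t).2 - xadd)) := by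
    intro t
    have h := hsq2 t
    have h2 := hfac ((X t).2)
    linarith [sq_nonneg ((X t).2 * (2*(X t).1 + (X t).2 - 1))]
  have hq3 : ∀ t, 0 ≤ (1 - (X t).1 - (X t).2) *
      (((1 - (X t).1 - (X t).2) - xmin) * ((1 - (X t).1 - (X t).2) - xmax)
        * ((1 - (X t).1 - (X t).2) - xadd)) := by
    intro t
    have h := hsq3 t
    have h2 := hfac (1 - (X t).1 - (X t).2)
    linarith [sq_nonneg ((1 - (X t).1 - (X t).2) * ((X t).2 - (X t).1))]
  -- ### all coordinates lie in [xmin, xmax]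
  have hband : ∀ t, (xmin ≤ (X t).1 ∧ (X t).1 ≤ xmax) ∧ (xmin ≤ (X t).2 ∧ (X t).2 ≤ xmax)
      ∧ (xmin ≤ 1 - (X t).1 - (X t).2 ∧ 1 - (X t).1 - (X t).2 ≤ xmax) := by
    have hc3 : Continuous (fun t => 1 - (X t).1 - (X t).2) :=
      (continuous_const.sub hc1).sub hc2
    rcases aux_sign_const hc1 hne1 with hu | hu
    · rcases aux_sign_const hc2 hne2 with hv | hv
      · -- all positive
        have hw : ∀ t, 0 < 1 - (X t).1 - (X t).2 := by
          intro t
          rcases lt_or_gt_of_ne (hne3 t) with h | h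
          · exfalso
            have hl := hlevel t
            nlinarith [mul_pos (hu t) (hv t)]
          · exact h
        intro t
        have hu1 : (X t).1 < 1 := by linarith [hv t, hw t]
        have hv1 : (X t).2 < 1 := by linarith [hu t, hw t]
        have hw1 : 1 - (X t).1 - (X t).2 < 1 := by linarith [hu t, hv t]
        exact ⟨aux_band hxmin0 hlt hxmax1 hxadd1 (hu t) hu1 (hq1 t),
          aux_band hxmin0 hlt hxmax1 hxadd1 (hv t) hv1 (hq2 t),
          aux_band hxmin0 hlt hxmax1 hxadd1 (hw t) hw1 (hq3 t)⟩
      · -- x1 > 0, x2 < 0, hence x3 < 0, x1 ≥ xadd; x2 strictly decreasing: contradiction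
        exfalso
        have hw : ∀ t, 1 - (X t).1 - (X t).2 < 0 := by
          intro t
          rcases lt_or_gt_of_ne (hne3 t) with h | h
          · exact h
          · exfalso
            have hl := hlevel t
            nlinarith [mul_neg_of_pos_of_neg (hu t) (hv t)]
        have hub : ∀ t, 1 < (X t).1 := by
          intro t
          have := hw t
          have := hv t
          linarith
        have huadd : ∀ t, xadd ≤ (X t).1 := by
          intro t
          by_contra h
          push_neg at h
          have hA : 0 < (X t).1 - xmin := by linarith [hub t]
          have hB : 0 < (X t).1 - xmax := by linarith [hub t]
          have hC : 0 < xadd - (X t).1 := by linarith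
          nlinarith [hq1 t, mul_pos (mul_pos (mul_pos (hu t) hA) hB) hC]
        have hderiv_neg : ∀ s, deriv (fun t => (X t).2) s < 0 := by
          intro s
          rw [(hdv s).deriv]
          have hpos : 0 < 2*(X s).1 + (X s).2 - 1 := by
            have := hw s
            have := hub s
            linarith
          exact mul_neg_of_neg_of_pos (hv s) hpos
        have hanti := strictAnti_of_deriv_neg hderiv_neg
        have hlt' := hanti hP
        have heq : (X (0+P)).2 = (X 0).2 := congrArg Prod.snd (hper 0)
        rw [zero_add] at heq
        simp only at hlt'
        exact (ne_of_lt hlt') heq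
    · rcases aux_sign_const hc2 hne2 with hv | hv
      · -- x1 < 0, x2 > 0, hence x3 < 0, x2 ≥ xadd; x1 strictly increasing: contradiction
        exfalso
        have hw : ∀ t, 1 - (X t).1 - (X t).2 < 0 := by
          intro t
          rcases lt_or_gt_of_ne (hne3 t) with h | h
          · exact h
          · exfalso
            have hl := hlevel t
            nlinarith [mul_neg_of_neg_of_pos (hu t) (hv t)]
        have hvb : ∀ t, 1 < (X t).2 := by
          intro t
          have := hw t
          have := hu t
          linarith
        have hvadd : ∀ t, xadd ≤ (X t).2 := by
          intro t
          by_contra h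
          push_neg at h
          have hA : 0 < (X t).2 - xmin := by linarith [hvb t]
          have hB : 0 < (X t).2 - xmax := by linarith [hvb t]
          have hC : 0 < xadd - (X t).2 := by linarith
          nlinarith [hq2 t, mul_pos (mul_pos (mul_pos (hv t) hA) hB) hC]
        have hderiv_pos : ∀ s, 0 < deriv (fun t => (X t).1) s := by
          intro s
          rw [(hdu s).deriv]
          have hneg : 1 - (X s).1 - 2*(X s).2 < 0 := by
            have := hw s
            have := hvb s
            linarith
          exact mul_pos_of_neg_of_neg (hu s) hneg
        have hmono := strictMono_of_deriv_pos hderiv_pos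
        have hlt' := hmono hP
        have heq : (X (0+P)).1 = (X 0).1 := congrArg Prod.fst (hper 0)
        rw [zero_add] at heq
        simp only at hlt'
        exact (ne_of_gt hlt') heq
      · -- x1 < 0, x2 < 0, hence x3 > 0, x3 ≥ xadd; x2 strictly increasing: contradiction
        exfalso
        have hw : ∀ t, 0 < 1 - (X t).1 - (X t).2 := by
          intro t
          rcases lt_or_gt_of_ne (hne3 t) with h | h
          · exfalso
            have hl := hlevel t
            nlinarith [mul_pos_of_neg_of_neg (hu t) (hv t), mul_neg_of_pos_of_neg (mul_pos_of_neg_of_neg (hu t) (hv t)) h]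
          · exact h
        have hwb : ∀ t, 1 < 1 - (X t).1 - (X t).2 := by
          intro t
          have := hu t
          have := hv t
          linarith
        have hwadd : ∀ t, xadd ≤ 1 - (X t).1 - (X t).2 := by
          intro t
          by_contra h
          push_neg at h
          have hA : 0 < (1 - (X t).1 - (X t).2) - xmin := by linarith [hwb t]
          have hB : 0 < (1 - (X t).1 - (X t).2) - xmax := by linarith [hwb t]
          have hC : 0 < xadd - (1 - (X t).1 - (X t).2) := by linarith
          nlinarith [hq3 t, mul_pos (mul_pos (mul_pos (hw t) hA) hB) hC]
        have hderiv_pos : ∀ s, 0 < deriv (fun t => (X t).2) s := by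
          intro s
          rw [(hdv s).deriv]
          have hneg : 2*(X s).1 + (X s).2 - 1 < 0 := by
            have := hwadd s
            have := hu s
            linarith
          exact mul_pos_of_neg_of_neg (hv s) hneg
        have hmono := strictMono_of_deriv_pos hderiv_pos
        have hlt' := hmono hP
        have heq : (X (0+P)).2 = (X 0).2 := congrArg Prod.snd (hper 0)
        rw [zero_add] at heq
        simp only at hlt'
        exact (ne_of_gt hlt') heq
  -- ### trajectories stay in the closed unit ball
  have hball : ∀ p : ℝ × ℝ, (xmin ≤ p.1 ∧ p.1 ≤ xmax) → (xmin ≤ p.2 ∧ p.2 ≤ xmax) →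
      p ∈ Metric.closedBall (0:ℝ × ℝ) 1 := by
    intro p hp1 hp2
    rw [Metric.mem_closedBall, dist_zero_right, Prod.norm_def]
    apply max_le
    · rw [Real.norm_eq_abs, abs_le]
      constructor <;> [linarith [hp1.1]; linarith [hp1.2]]
    · rw [Real.norm_eq_abs, abs_le]
      constructor <;> [linarith [hp2.1]; linarith [hp2.2]]
  have hXball : ∀ t, X t ∈ Metric.closedBall (0:ℝ × ℝ) 1 := by
    intro t
    exact hball (X t) (hband t).1 (hband t).2.1
  obtain ⟨τ, σ, hτσ, hPeq, hτval, hσval, hIoo, hdpos⟩ :=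
    stage2 z xmin xmax xadd hz0 hz27 hxmin0 hxmax1 hlt hlt2 hr1 hr2 hfac X hlevel hode
      hXc hc1 hc2 hdu hdv hdw hsq1 hband hXball hball P hP hper hminper
  exact stage3 z xmin xmax xadd hz0 hxmin0 hxmax1 hlt hlt2 hfac X hc1 hdu hsq1
    (fun t => (hband t).1) P hP τ σ hτσ hPeq hτval hσval hIoo hdpos
end

section
/- For any z ∈ (0,1/27) and the T(z)-periodic orbit X(t) on the level set x1 x2 x3 = z of the cyclic Lotka-Volterra flow, the time averages ⟨x_i x_{i+1}²⟩_z and ⟨x_i x_{i-1}²⟩_z are all equal, independently of i ∈ ℤ/3ℤ; in particular ⟨x_i x_{i+1}²⟩_z = ⟨x_i x_{i-1}²⟩_z = ⟨x_{i+1} x_{i-1}²⟩_z. -/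
open Set

/-- Coordinate functions x₀ = x₁, x₁ = x₂, x₂ = x₃ = 1-x₁-x₂, indexed by ℤ/3ℤ. -/
def coordFn (i : ZMod 3) (p : ℝ × ℝ) : ℝ :=
  if i = 0 then p.1 else if i = 1 then p.2 else 1 - p.1 - p.2

/-- Time average ⟨x_i x_j²⟩ over a T-periodic orbit X. -/
noncomputable def avgPair (X : ℝ → ℝ × ℝ) (T : ℝ) (i j : ZMod 3) : ℝ :=
  (1 / T) * ∫ t in (0:ℝ)..T, coordFn i (X t) * coordFn j (X t) ^ 2

/-- along the periodic orbit on the level set {x₁x₂x₃ = z},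
the averages ⟨x_i x_{i+1}²⟩ and ⟨x_i x_{i-1}²⟩ are all equal, independently of i;
in particular ⟨x_i x_{i+1}²⟩ = ⟨x_i x_{i-1}²⟩ = ⟨x_{i+1} x_{i-1}²⟩. -/
theorem stmt_15 (z : ℝ) (hz : z ∈ Ioo (0:ℝ) (1 / 27))
    (X : ℝ → ℝ × ℝ) (hode : ∀ t, HasDerivAt X (LV (X t)) t)
    (hlevel : ∀ t, (X t).1 * (X t).2 * (1 - (X t).1 - (X t).2) = z)
    (T : ℝ) (hT : 0 < T) (hper : ∀ t, X (t + T) = X t) :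
    (∀ i : ZMod 3, avgPair X T i (i + 1) = avgPair X T i (i - 1)) ∧
    (∀ i j : ZMod 3, avgPair X T i (i + 1) = avgPair X T j (j + 1)) ∧
    (∀ i : ZMod 3, avgPair X T i (i + 1) = avgPair X T (i + 1) (i - 1)) := by
  set u : ℝ → ℝ := fun t => (X t).1 with hu_def
  set v : ℝ → ℝ := fun t => (X t).2 with hv_def
  have hu : ∀ t, HasDerivAt u (u t * (1 - u t - 2 * v t)) t := fun t => by
    simpa [LV, u, v] using ((hode t).hasFDerivAt.fst).hasDerivAt
  have hv : ∀ t, HasDerivAt v (v t * (2 * u t + v t - 1)) t := fun t => by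
    simpa [LV, u, v] using ((hode t).hasFDerivAt.snd).hasDerivAt
  have hcX : Continuous X := continuous_iff_continuousAt.mpr fun t => (hode t).continuousAt
  have hcu : Continuous u := hcX.fst
  have hcv : Continuous v := hcX.snd
  -- period: f (X T) = f (X 0)
  have hXT : X T = X 0 := by simpa using hper 0
  -- key: integral of a derivative over a period is zero
  have key : ∀ (g h : ℝ → ℝ), (∀ t, HasDerivAt g (h t) t) → Continuous h → g T = g 0 →
      (∫ t in (0:ℝ)..T, h t) = 0 := by
    intro g h hg hc hgT
    rw [intervalIntegral.integral_eq_sub_of_hasDerivAt (fun t _ => hg t)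
      (hc.intervalIntegrable _ _), hgT, sub_self]
  -- integrability of any polynomial expression
  have ii : ∀ f : ℝ → ℝ, Continuous f → IntervalIntegrable f MeasureTheory.volume 0 T :=
    fun f hf => hf.intervalIntegrable _ _
  -- d/dt (u v) = v u² - u v²
  have h1 : (∫ t in (0:ℝ)..T, (v t * u t ^ 2 - u t * v t ^ 2)) = 0 := by
    apply key (fun t => u t * v t) _ (fun t => by
      have := (hu t).mul (hv t); exact this.congr_deriv (by ring))
      (by fun_prop) (by simp only [hu_def, hv_def, hXT])
  -- d/dt (v w) = w v² - v w², with w = 1 - u - v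
  have h2 : (∫ t in (0:ℝ)..T,
      ((1 - u t - v t) * v t ^ 2 - v t * (1 - u t - v t) ^ 2)) = 0 := by
    apply key (fun t => v t * (1 - u t - v t)) _ (fun t => by
      have := (hv t).mul (((hasDerivAt_const t (1:ℝ)).sub (hu t)).sub (hv t))
      exact this.congr_deriv (by simp only [Pi.sub_apply]; ring)) (by fun_prop) (by simp only [hu_def, hv_def, hXT])
  -- d/dt (w u) = u w² - w u²
  have h3 : (∫ t in (0:ℝ)..T,
      (u t * (1 - u t - v t) ^ 2 - (1 - u t - v t) * u t ^ 2)) = 0 := by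
    apply key (fun t => (1 - u t - v t) * u t) _ (fun t => by
      have := ((((hasDerivAt_const t (1:ℝ)).sub (hu t)).sub (hv t))).mul (hu t)
      exact this.congr_deriv (by simp only [Pi.sub_apply]; ring)) (by fun_prop) (by simp only [hu_def, hv_def, hXT])
  -- d/dt u = u w - u v
  have h4 : (∫ t in (0:ℝ)..T, (u t * (1 - u t - v t) - u t * v t)) = 0 := by
    apply key u _ (fun t => by
      have := hu t; convert this using 1; ring) (by fun_prop) (by simp only [hu_def, hv_def, hXT])
  -- d/dt v = u v - v w
  have h5 : (∫ t in (0:ℝ)..T, (u t * v t - v t * (1 - u t - v t))) = 0 := by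
    apply key v _ (fun t => by
      have := hv t; convert this using 1; ring) (by fun_prop) (by simp only [hu_def, hv_def, hXT])
  -- level set: u v - u²v - uv² = uvw = z
  have e1 : (∫ t in (0:ℝ)..T, (u t * v t - v t * u t ^ 2 - u t * v t ^ 2)) = z * T := by
    rw [intervalIntegral.integral_congr (g := fun _ => z)
      (fun t _ => by have := hlevel t; nlinarith [hlevel t])]
    simp [mul_comm]
  have e2 : (∫ t in (0:ℝ)..T, (v t * (1 - u t - v t)
      - (1 - u t - v t) * v t ^ 2 - v t * (1 - u t - v t) ^ 2)) = z * T := by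
    rw [intervalIntegral.integral_congr (g := fun _ => z)
      (fun t _ => by have := hlevel t; nlinarith [hlevel t])]
    simp [mul_comm]
  have e3 : (∫ t in (0:ℝ)..T, (u t * (1 - u t - v t)
      - u t * (1 - u t - v t) ^ 2 - (1 - u t - v t) * u t ^ 2)) = z * T := by
    rw [intervalIntegral.integral_congr (g := fun _ => z)
      (fun t _ => by have := hlevel t; nlinarith [hlevel t])]
    simp [mul_comm]
  -- name the six cubic integrals and three quadratic ones
  set A01 := ∫ t in (0:ℝ)..T, u t * v t ^ 2 with hA01
  set A10 := ∫ t in (0:ℝ)..T, v t * u t ^ 2 with hA10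
  set A12 := ∫ t in (0:ℝ)..T, v t * (1 - u t - v t) ^ 2 with hA12
  set A21 := ∫ t in (0:ℝ)..T, (1 - u t - v t) * v t ^ 2 with hA21
  set A20 := ∫ t in (0:ℝ)..T, (1 - u t - v t) * u t ^ 2 with hA20
  set A02 := ∫ t in (0:ℝ)..T, u t * (1 - u t - v t) ^ 2 with hA02
  set Puv := ∫ t in (0:ℝ)..T, u t * v t with hPuv
  set Pvw := ∫ t in (0:ℝ)..T, v t * (1 - u t - v t) with hPvw
  set Pwu := ∫ t in (0:ℝ)..T, u t * (1 - u t - v t) with hPwu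
  -- split the integrals
  have s1 : A10 - A01 = 0 := by
    rw [← intervalIntegral.integral_sub (ii _ (by fun_prop)) (ii _ (by fun_prop))]; exact h1
  have s2 : A21 - A12 = 0 := by
    rw [← intervalIntegral.integral_sub (ii _ (by fun_prop)) (ii _ (by fun_prop))]; exact h2
  have s3 : A02 - A20 = 0 := by
    rw [← intervalIntegral.integral_sub (ii _ (by fun_prop)) (ii _ (by fun_prop))]; exact h3
  have s4 : Pwu - Puv = 0 := by
    rw [← intervalIntegral.integral_sub (ii _ (by fun_prop)) (ii _ (by fun_prop))]; exact h4
  have s5 : Puv - Pvw = 0 := by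
    rw [← intervalIntegral.integral_sub (ii _ (by fun_prop)) (ii _ (by fun_prop))]; exact h5
  have t1 : Puv - A10 - A01 = z * T := by
    rw [← intervalIntegral.integral_sub (ii _ (by fun_prop)) (ii _ (by fun_prop)),
      ← intervalIntegral.integral_sub (ii _ (by fun_prop)) (ii _ (by fun_prop))]; exact e1
  have t2 : Pvw - A21 - A12 = z * T := by
    rw [← intervalIntegral.integral_sub (ii _ (by fun_prop)) (ii _ (by fun_prop)),
      ← intervalIntegral.integral_sub (ii _ (by fun_prop)) (ii _ (by fun_prop))]; exact e2
  have t3 : Pwu - A02 - A20 = z * T := by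
    rw [← intervalIntegral.integral_sub (ii _ (by fun_prop)) (ii _ (by fun_prop)),
      ← intervalIntegral.integral_sub (ii _ (by fun_prop)) (ii _ (by fun_prop))]; exact e3
  -- conclude all six are equal
  have q1 : A10 = A01 := by linarith
  have q2 : A21 = A12 := by linarith
  have q3 : A02 = A20 := by linarith
  have q4 : A12 = A01 := by linarith
  have q5 : A20 = A01 := by linarith
  have n1 : ((1:ZMod 3)) ≠ 0 := by decide
  have n2 : ((2:ZMod 3)) ≠ 0 := by decide
  have n3 : ((2:ZMod 3)) ≠ 1 := by decide
  have u01 : avgPair X T 0 1 = (1/T) * A01 := by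
    rw [hA01]; simp [avgPair, coordFn, n1, n2, n3, hu_def, hv_def]
  have u10 : avgPair X T 1 0 = (1/T) * A01 := by
    rw [← q1, hA10]; simp [avgPair, coordFn, n1, n2, n3, hu_def, hv_def]
  have u12 : avgPair X T 1 2 = (1/T) * A01 := by
    rw [← q4, hA12]; simp [avgPair, coordFn, n1, n2, n3, hu_def, hv_def]
  have u21 : avgPair X T 2 1 = (1/T) * A01 := by
    rw [← q4, ← q2, hA21]; simp [avgPair, coordFn, n1, n2, n3, hu_def, hv_def]
  have u20 : avgPair X T 2 0 = (1/T) * A01 := by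
    rw [← q5, hA20]; simp [avgPair, coordFn, n1, n2, n3, hu_def, hv_def]
  have u02 : avgPair X T 0 2 = (1/T) * A01 := by
    rw [← q5, ← q3, hA02]; simp [avgPair, coordFn, n1, n2, n3, hu_def, hv_def]
  have key2 : ∀ i j : ZMod 3, i ≠ j → avgPair X T i j = (1/T) * A01 := by
    intro i j hij
    fin_cases i <;> fin_cases j <;>
      first
        | exact absurd rfl hij
        | exact u01 | exact u10 | exact u12 | exact u21 | exact u20 | exact u02
  have d1 : ∀ i : ZMod 3, i ≠ i + 1 := by decide
  have d2 : ∀ i : ZMod 3, i ≠ i - 1 := by decide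
  have d3 : ∀ i : ZMod 3, i + 1 ≠ i - 1 := by decide
  refine ⟨fun i => ?_, fun i j => ?_, fun i => ?_⟩
  · rw [key2 i (i+1) (d1 i), key2 i (i-1) (d2 i)]
  · rw [key2 i (i+1) (d1 i), key2 j (j+1) (d1 j)]
  · rw [key2 i (i+1) (d1 i), key2 (i+1) (i-1) (d3 i)]
end

section
/- Along a periodic orbit on the level set x1 x2 x3 = z, the identity ⟨x_i x_{i+1}²⟩_z - z = -⟨x_{i+1} ẋ_i⟩_z holds for each i ∈ ℤ/3ℤ, where ẋ_i = x_i(x_{i-1} - x_{i+1}); consequently m(z) := -⟨x_{i+1} ẋ_i⟩_z does not depend on i and equals -A(z)/T(z) > 0. -/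
open Set

/-- The time derivative ẋ_i = x_i(x_{i-1} - x_{i+1}) expressed as a function of the point. -/
def dotFn (i : ZMod 3) (p : ℝ × ℝ) : ℝ :=
  coordFn i p * (coordFn (i - 1) p - coordFn (i + 1) p)

/-- Time average ⟨x_{i+1} ẋ_i⟩ over a T-periodic orbit X. -/
noncomputable def avgDot (X : ℝ → ℝ × ℝ) (T : ℝ) (i : ZMod 3) : ℝ :=
  (1 / T) * ∫ t in (0:ℝ)..T, coordFn (i + 1) (X t) * dotFn i (X t)

/-- A continuous nonvanishing function on ℝ has constant sign. -/
lemma sign_const (f : ℝ → ℝ) (hf : Continuous f) (hne : ∀ t, f t ≠ 0) :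
    (∀ t, 0 < f t) ∨ (∀ t, f t < 0) := by
  rcases (hne 0).lt_or_gt with h0 | h0
  · right
    intro t
    by_contra h
    push_neg at h
    have ht : 0 < f t := lt_of_le_of_ne h (Ne.symm (hne t))
    rcases le_total t 0 with hle | hle
    · obtain ⟨s, _, hs⟩ := intermediate_value_Icc' hle hf.continuousOn
        (show (0:ℝ) ∈ Icc (f 0) (f t) from ⟨h0.le, ht.le⟩)
      exact hne s hs
    · obtain ⟨s, _, hs⟩ := intermediate_value_Icc hle hf.continuousOn
        (show (0:ℝ) ∈ Icc (f 0) (f t) from ⟨h0.le, ht.le⟩)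
      exact hne s hs
  · left
    intro t
    by_contra h
    push_neg at h
    have ht : f t < 0 := lt_of_le_of_ne h (hne t)
    rcases le_total t 0 with hle | hle
    · obtain ⟨s, _, hs⟩ := intermediate_value_Icc hle hf.continuousOn
        (show (0:ℝ) ∈ Icc (f t) (f 0) from ⟨ht.le, h0.le⟩)
      exact hne s hs
    · obtain ⟨s, _, hs⟩ := intermediate_value_Icc' hle hf.continuousOn
        (show (0:ℝ) ∈ Icc (f t) (f 0) from ⟨ht.le, h0.le⟩)
      exact hne s hs

set_option maxHeartbeats 2000000 in
/-- ⟨x_i x_{i+1}²⟩ - z = -⟨x_{i+1} ẋ_i⟩ for each i; hence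
m(z) := -⟨x_{i+1} ẋ_i⟩ is independent of i and equals -A(z)/T(z) > 0, with
A(z) = ∫₀ᵀ x₂ẋ₁ dt. -/
theorem stmt_16 (z : ℝ) (hz : z ∈ Ioo (0:ℝ) (1 / 27))
    (X : ℝ → ℝ × ℝ) (hode : ∀ t, HasDerivAt X (LV (X t)) t)
    (hlevel : ∀ t, (X t).1 * (X t).2 * (1 - (X t).1 - (X t).2) = z)
    (T : ℝ) (hT : 0 < T) (hper : ∀ t, X (t + T) = X t) :
    (∀ i : ZMod 3, avgPair X T i (i + 1) - z = -avgDot X T i) ∧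
    (∀ i j : ZMod 3, avgDot X T i = avgDot X T j) ∧
    -avgDot X T 0 = -(∫ t in (0:ℝ)..T, coordFn 1 (X t) * dotFn 0 (X t)) / T ∧
    0 < -avgDot X T 0 := by
  obtain ⟨hz0, hz27⟩ := hz
  have hTne : T ≠ 0 := ne_of_gt hT
  have hXT : X T = X 0 := by simpa using hper 0
  have hcase : ∀ i : ZMod 3, i = 0 ∨ i = 1 ∨ i = 2 := by decide
  -- continuity
  have hXc : Continuous X :=
    continuous_iff_continuousAt.mpr fun t => (hode t).continuousAt
  have hc1 : Continuous fun t => (X t).1 := hXc.fst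
  have hc2 : Continuous fun t => (X t).2 := hXc.snd
  have hcc : ∀ i : ZMod 3, Continuous fun t => coordFn i (X t) := by
    intro i
    rcases hcase i with rfl | rfl | rfl
    · exact hc1
    · exact hc2
    · show Continuous fun t => 1 - (X t).1 - (X t).2
      fun_prop
  -- derivatives of the coordinates
  have hx' : ∀ (i : ZMod 3) (t : ℝ),
      HasDerivAt (fun t => coordFn i (X t)) (dotFn i (X t)) t := by
    intro i t
    have h1 := (hode t).fst
    have h2 := (hode t).snd
    rcases hcase i with rfl | rfl | rfl
    · have e : dotFn 0 (X t) = (LV (X t)).1 := by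
        show (X t).1 * ((1 - (X t).1 - (X t).2) - (X t).2)
          = (X t).1 * (1 - (X t).1 - 2*(X t).2)
        ring
      exact e ▸ h1
    · have e : dotFn 1 (X t) = (LV (X t)).2 := by
        show (X t).2 * ((X t).1 - (1 - (X t).1 - (X t).2))
          = (X t).2 * (2*(X t).1 + (X t).2 - 1)
        ring
      exact e ▸ h2
    · have h3 := ((hasDerivAt_const t (1:ℝ)).sub h1).sub h2
      have e : dotFn 2 (X t) = 0 - (LV (X t)).1 - (LV (X t)).2 := by
        show (1 - (X t).1 - (X t).2) * ((X t).2 - (X t).1)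
          = 0 - (X t).1 * (1 - (X t).1 - 2*(X t).2) - (X t).2 * (2*(X t).1 + (X t).2 - 1)
        ring
      exact e ▸ h3
  -- FTC for periodic quantities
  have key : ∀ (F f : ℝ → ℝ), (∀ t, HasDerivAt F (f t) t) → Continuous f →
      F T = F 0 → (∫ t in (0:ℝ)..T, f t) = 0 := by
    intro F f hF hf hFT
    rw [intervalIntegral.integral_eq_sub_of_hasDerivAt (fun t _ => hF t)
      (hf.intervalIntegrable 0 T), hFT, sub_self]
  have ii : ∀ {f : ℝ → ℝ}, Continuous f → IntervalIntegrable f MeasureTheory.volume 0 T :=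
    fun h => h.intervalIntegrable 0 T
  -- pointwise identities
  have hsum : ∀ (i : ZMod 3) (t : ℝ),
      coordFn i (X t) + coordFn (i+1) (X t) + coordFn (i-1) (X t) = 1 := by
    intro i t
    rcases hcase i with rfl | rfl | rfl
    · show (X t).1 + (X t).2 + (1 - (X t).1 - (X t).2) = 1; ring
    · show (X t).2 + (1 - (X t).1 - (X t).2) + (X t).1 = 1; ring
    · show (1 - (X t).1 - (X t).2) + (X t).1 + (X t).2 = 1; ring
  have hprod : ∀ (i : ZMod 3) (t : ℝ),
      coordFn i (X t) * coordFn (i+1) (X t) * coordFn (i-1) (X t) = z := by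
    intro i t
    rcases hcase i with rfl | rfl | rfl
    · exact hlevel t
    · show (X t).2 * (1 - (X t).1 - (X t).2) * (X t).1 = z
      linear_combination hlevel t
    · show (1 - (X t).1 - (X t).2) * (X t).1 * (X t).2 = z
      linear_combination hlevel t
  -- the integrals
  set P : ZMod 3 → ℝ := fun i => ∫ t in (0:ℝ)..T, coordFn i (X t) * coordFn (i+1) (X t)
    with hPdef
  set A : ZMod 3 → ℝ := fun i => ∫ t in (0:ℝ)..T, coordFn i (X t) * coordFn (i+1) (X t) ^ 2
    with hAdef
  -- (1): P (i-1) = P i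
  have hP : ∀ i : ZMod 3, P (i-1) = P i := by
    intro i
    have h0 : (∫ t in (0:ℝ)..T, dotFn i (X t)) = 0 :=
      key _ _ (hx' i) (by
        show Continuous fun t => coordFn i (X t) * (coordFn (i-1) (X t) - coordFn (i+1) (X t))
        exact (hcc i).mul ((hcc (i-1)).sub (hcc (i+1)))) (by simp [hXT])
    have hsplit : (∫ t in (0:ℝ)..T, dotFn i (X t)) =
        (∫ t in (0:ℝ)..T, coordFn (i-1) (X t) * coordFn i (X t)) -
        (∫ t in (0:ℝ)..T, coordFn i (X t) * coordFn (i+1) (X t)) := by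
      rw [← intervalIntegral.integral_sub (ii ((hcc (i-1)).mul (hcc i)))
        (ii ((hcc i).mul (hcc (i+1))))
        (f := fun t => coordFn (i-1) (X t) * coordFn i (X t))
        (g := fun t => coordFn i (X t) * coordFn (i+1) (X t))]
      refine intervalIntegral.integral_congr fun t _ => ?_
      show coordFn i (X t) * (coordFn (i-1) (X t) - coordFn (i+1) (X t)) = _
      ring
    have e : P (i-1) = ∫ t in (0:ℝ)..T, coordFn (i-1) (X t) * coordFn i (X t) := by
      rw [hPdef]; simp only [sub_add_cancel]
    have := hsplit.symm.trans h0
    rw [hPdef] at e ⊢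
    simp only at e this ⊢
    linarith [e, this]
  -- (2): B i = A i
  have hB : ∀ i : ZMod 3,
      (∫ t in (0:ℝ)..T, coordFn i (X t) ^ 2 * coordFn (i+1) (X t)) = A i := by
    intro i
    have hd : ∀ t, HasDerivAt (fun t => coordFn i (X t) * coordFn (i+1) (X t))
        (coordFn i (X t) ^ 2 * coordFn (i+1) (X t)
          - coordFn i (X t) * coordFn (i+1) (X t) ^ 2) t := by
      intro t
      have h := (hx' i t).mul (hx' (i+1) t)
      have e : coordFn i (X t) ^ 2 * coordFn (i+1) (X t)
            - coordFn i (X t) * coordFn (i+1) (X t) ^ 2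
          = dotFn i (X t) * coordFn (i+1) (X t) + coordFn i (X t) * dotFn (i+1) (X t) := by
        have e1 : i + 1 + 1 = i - 1 := by
          have h3 : (3:ZMod 3) = 0 := by decide
          linear_combination h3
        have e2 : i + 1 - 1 = i := by ring
        unfold dotFn
        rw [e1, e2]
        ring
      exact e ▸ h
    have h0 := key _ _ hd
      ((((hcc i).pow 2).mul (hcc (i+1))).sub ((hcc i).mul ((hcc (i+1)).pow 2)))
      (by simp [hXT])
    have hsplit := intervalIntegral.integral_sub (ii (((hcc i).pow 2).mul (hcc (i+1))))
      (ii ((hcc i).mul ((hcc (i+1)).pow 2)))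
      (f := fun t => coordFn i (X t) ^ 2 * coordFn (i+1) (X t))
      (g := fun t => coordFn i (X t) * coordFn (i+1) (X t) ^ 2)
    have := hsplit.symm.trans h0
    rw [hAdef]
    simp only at this ⊢
    linarith
  -- (3): A i = (P i - z*T)/2
  have hA : ∀ i : ZMod 3, A i = (P i - z * T) / 2 := by
    intro i
    have hpt : ∀ t, coordFn i (X t) * coordFn (i+1) (X t) ^ 2 =
        coordFn i (X t) * coordFn (i+1) (X t)
          - coordFn i (X t) ^ 2 * coordFn (i+1) (X t) - z := by
      intro t
      linear_combination (coordFn i (X t) * coordFn (i+1) (X t)) * hsum i t - hprod i t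
    have hsplit : A i = P i
        - (∫ t in (0:ℝ)..T, coordFn i (X t) ^ 2 * coordFn (i+1) (X t)) - z * T := by
      rw [hAdef, hPdef]
      simp only
      rw [intervalIntegral.integral_congr (fun t _ => hpt t),
        intervalIntegral.integral_sub
          ((ii ((hcc i).mul (hcc (i+1)))).sub (ii (((hcc i).pow 2).mul (hcc (i+1)))))
          (ii continuous_const)
          (f := fun t => coordFn i (X t) * coordFn (i+1) (X t)
            - coordFn i (X t) ^ 2 * coordFn (i+1) (X t)) (g := fun _ => z),
        intervalIntegral.integral_sub (ii ((hcc i).mul (hcc (i+1))))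
          (ii (((hcc i).pow 2).mul (hcc (i+1))))
          (f := fun t => coordFn i (X t) * coordFn (i+1) (X t))
          (g := fun t => coordFn i (X t) ^ 2 * coordFn (i+1) (X t))]
      rw [intervalIntegral.integral_const]
      simp [mul_comm]
    rw [hB i] at hsplit
    linarith
  -- avgDot in terms of A
  have hAD : ∀ i : ZMod 3, avgDot X T i = (1/T) * (z * T - A i) := by
    intro i
    rw [avgDot, hAdef]
    congr 1
    have hpt : ∀ t, coordFn (i+1) (X t) * dotFn i (X t) =
        z - coordFn i (X t) * coordFn (i+1) (X t) ^ 2 := by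
      intro t
      show coordFn (i+1) (X t) *
        (coordFn i (X t) * (coordFn (i-1) (X t) - coordFn (i+1) (X t))) = _
      linear_combination hprod i t
    rw [intervalIntegral.integral_congr (fun t _ => hpt t),
      intervalIntegral.integral_sub (ii continuous_const)
        (ii ((hcc i).mul ((hcc (i+1)).pow 2)))
        (f := fun _ => z) (g := fun t => coordFn i (X t) * coordFn (i+1) (X t) ^ 2),
      intervalIntegral.integral_const]
    simp [mul_comm]
  -- all P i equal
  have hP01 : P 0 = P 1 := by
    have := hP 1; rwa [show (1:ZMod 3) - 1 = 0 from rfl] at this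
  have hP12 : P 1 = P 2 := by
    have := hP 2; rwa [show (2:ZMod 3) - 1 = 1 from rfl] at this
  have hPall : ∀ i : ZMod 3, P i = P 0 := by
    intro i
    rcases hcase i with rfl | rfl | rfl
    · rfl
    · exact hP01.symm
    · exact (hP01.trans hP12).symm
  -- coordinates never vanish
  have hne1 : ∀ t, (X t).1 ≠ 0 := by
    intro t h
    have h' := hlevel t
    rw [h] at h'
    simp only [zero_mul] at h'
    exact absurd h'.symm (ne_of_gt hz0)
  have hne2 : ∀ t, (X t).2 ≠ 0 := by
    intro t h
    have h' := hlevel t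
    rw [h] at h'
    simp only [mul_zero, zero_mul] at h'
    exact absurd h'.symm (ne_of_gt hz0)
  have hne3 : ∀ t, 1 - (X t).1 - (X t).2 ≠ 0 := by
    intro t h
    have h' := hlevel t
    rw [h] at h'
    simp only [mul_zero] at h'
    exact absurd h'.symm (ne_of_gt hz0)
  have hnei : ∀ (i : ZMod 3) (t : ℝ), coordFn i (X t) ≠ 0 := by
    intro i t
    rcases hcase i with rfl | rfl | rfl
    · exact hne1 t
    · exact hne2 t
    · exact hne3 t
  -- averages of the coordinates are all T/3
  have hlog : ∀ i : ZMod 3,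
      (∫ t in (0:ℝ)..T, (coordFn (i-1) (X t) - coordFn (i+1) (X t))) = 0 := by
    intro i
    refine key (fun t => Real.log (coordFn i (X t))) _ (fun t => ?_)
      ((hcc (i-1)).sub (hcc (i+1))) (by simp [hXT])
    have h := (Real.hasDerivAt_log (hnei i t)).comp t (hx' i t)
    have e : coordFn (i-1) (X t) - coordFn (i+1) (X t)
        = (coordFn i (X t))⁻¹ * dotFn i (X t) := by
      rw [dotFn, inv_mul_cancel_left₀ (hnei i t)]
    exact e ▸ h
  have hSsub : ∀ i : ZMod 3,
      (∫ t in (0:ℝ)..T, coordFn (i-1) (X t)) = ∫ t in (0:ℝ)..T, coordFn (i+1) (X t) := by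
    intro i
    have h := hlog i
    rw [intervalIntegral.integral_sub (ii (hcc (i-1))) (ii (hcc (i+1)))] at h
    linarith
  have hS20 : (∫ t in (0:ℝ)..T, coordFn 2 (X t)) = ∫ t in (0:ℝ)..T, coordFn 1 (X t) := by
    have := hSsub 0
    rwa [show (0:ZMod 3) - 1 = 2 from rfl, show (0:ZMod 3) + 1 = 1 from rfl] at this
  have hS02 : (∫ t in (0:ℝ)..T, coordFn 0 (X t)) = ∫ t in (0:ℝ)..T, coordFn 2 (X t) := by
    have := hSsub 1
    rwa [show (1:ZMod 3) - 1 = 0 from rfl, show (1:ZMod 3) + 1 = 2 from rfl] at this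
  have hStot : (∫ t in (0:ℝ)..T, coordFn 0 (X t)) + (∫ t in (0:ℝ)..T, coordFn 1 (X t))
      + (∫ t in (0:ℝ)..T, coordFn 2 (X t)) = T := by
    rw [← intervalIntegral.integral_add (ii (hcc 0)) (ii (hcc 1)),
      ← intervalIntegral.integral_add ((ii (hcc 0)).add (ii (hcc 1))) (ii (hcc 2))]
    have hone : ∀ t : ℝ, coordFn 0 (X t) + coordFn 1 (X t) + coordFn 2 (X t) = 1 := by
      intro t
      show (X t).1 + (X t).2 + (1 - (X t).1 - (X t).2) = 1
      ring
    rw [intervalIntegral.integral_congr (g := fun _ => (1:ℝ)) (fun t _ => hone t)]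
    simp
  have hS0 : (∫ t in (0:ℝ)..T, coordFn 0 (X t)) = T / 3 := by linarith
  have hS1 : (∫ t in (0:ℝ)..T, coordFn 1 (X t)) = T / 3 := by linarith
  have hS2 : (∫ t in (0:ℝ)..T, coordFn 2 (X t)) = T / 3 := by linarith
  -- no coordinate can be ≥ 1 everywhere
  have big : ∀ i : ZMod 3, (∀ t, 1 ≤ coordFn i (X t)) → False := by
    intro i hbig
    have hmono : (T:ℝ) - 0 ≤ ∫ t in (0:ℝ)..T, coordFn i (X t) := by
      have := intervalIntegral.integral_mono_on (f := fun _ => (1:ℝ))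
        (g := fun t => coordFn i (X t)) hT.le (ii continuous_const) (ii (hcc i))
        (fun t _ => hbig t)
      simpa using this
    rcases hcase i with rfl | rfl | rfl
    · rw [hS0] at hmono; linarith
    · rw [hS1] at hmono; linarith
    · rw [hS2] at hmono; linarith
  -- positivity of all coordinates
  have hpos : ∀ t, 0 < (X t).1 ∧ 0 < (X t).2 ∧ 0 < 1 - (X t).1 - (X t).2 := by
    have s1 := sign_const _ hc1 hne1
    have s2 := sign_const _ hc2 hne2
    have s3 := sign_const _ (by fun_prop : Continuous fun t => 1 - (X t).1 - (X t).2) hne3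
    have hl0 := hlevel 0
    rcases s1 with p1 | n1 <;> rcases s2 with p2 | n2 <;> rcases s3 with p3 | n3
    · exact fun t => ⟨p1 t, p2 t, p3 t⟩
    · exact absurd hl0 (ne_of_lt (by calc _ < (0:ℝ) := mul_neg_of_pos_of_neg (mul_pos (p1 0) (p2 0)) (n3 0)
        _ < z := hz0))
    · exact absurd hl0 (ne_of_lt (by calc _ < (0:ℝ) := mul_neg_of_neg_of_pos (mul_neg_of_pos_of_neg (p1 0) (n2 0)) (p3 0)
        _ < z := hz0))
    · exfalso
      refine big 0 fun t => ?_
      show (1:ℝ) ≤ (X t).1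
      linarith [n2 t, n3 t]
    · exact absurd hl0 (ne_of_lt (by calc _ < (0:ℝ) := mul_neg_of_neg_of_pos (mul_neg_of_neg_of_pos (n1 0) (p2 0)) (p3 0)
        _ < z := hz0))
    · exfalso
      refine big 1 fun t => ?_
      show (1:ℝ) ≤ (X t).2
      linarith [n1 t, n3 t]
    · exfalso
      refine big 2 fun t => ?_
      show (1:ℝ) ≤ 1 - (X t).1 - (X t).2
      linarith [n1 t, n2 t]
    · exact absurd hl0 (ne_of_lt (by calc _ < (0:ℝ) := mul_neg_of_pos_of_neg (mul_pos_of_neg_of_neg (n1 0) (n2 0)) (n3 0)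
        _ < z := hz0))
  -- the cube-root constant
  set c : ℝ := (27 * z ^ 2) ^ ((1:ℝ)/3) with hcdef
  have h27pos : (0:ℝ) < 27 * z ^ 2 := by positivity
  have hcpos : 0 < c := Real.rpow_pos_of_pos h27pos _
  have hc3 : c ^ 3 = 27 * z ^ 2 := by
    rw [hcdef, ← Real.rpow_natCast ((27 * z ^ 2) ^ ((1:ℝ)/3)) 3, ← Real.rpow_mul h27pos.le]
    norm_num
  have hc9 : 9 * z < c := by
    by_contra h
    push_neg at h
    have h1 : c ^ 3 ≤ (9 * z) ^ 3 := pow_le_pow_left₀ hcpos.le h 3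
    rw [hc3] at h1
    nlinarith [hz0, hz27]
  -- pointwise AM-GM bound
  have hptc : ∀ t : ℝ, c ≤ (X t).1 * (X t).2 + (X t).2 * (1 - (X t).1 - (X t).2)
      + (1 - (X t).1 - (X t).2) * (X t).1 := by
    intro t
    obtain ⟨q1, q2, q3⟩ := hpos t
    set u := (X t).1 * (X t).2 with hu'
    set v := (X t).2 * (1 - (X t).1 - (X t).2) with hv'
    set w := (1 - (X t).1 - (X t).2) * (X t).1 with hw'
    have hu : 0 < u := mul_pos q1 q2
    have hv : 0 < v := mul_pos q2 q3
    have hw : 0 < w := mul_pos q3 q1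
    have huvw : u * v * w = z ^ 2 := by
      rw [hu', hv', hw']
      linear_combination ((X t).1 * (X t).2 * (1 - (X t).1 - (X t).2) + z) * hlevel t
    have hAM : 27 * (u * v * w) ≤ (u + v + w) ^ 3 := by
      nlinarith [sq_nonneg (u - v), sq_nonneg (v - w), sq_nonneg (u - w), hu.le, hv.le, hw.le,
        mul_pos hu hv, mul_pos hv hw, mul_pos hu hw]
    by_contra h
    push_neg at h
    have hlt : (u + v + w) ^ 3 < c ^ 3 :=
      pow_lt_pow_left₀ h (by positivity) (by norm_num)
    rw [hc3] at hlt
    nlinarith [hAM, huvw]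
  -- integral bound: T * c ≤ 3 * P 0
  have hsum3 : P 0 + P 1 + P 2 = ∫ t in (0:ℝ)..T, ((X t).1 * (X t).2
      + (X t).2 * (1 - (X t).1 - (X t).2) + (1 - (X t).1 - (X t).2) * (X t).1) := by
    have e0 : P 0 = ∫ t in (0:ℝ)..T, coordFn 0 (X t) * coordFn 1 (X t) := rfl
    have e1 : P 1 = ∫ t in (0:ℝ)..T, coordFn 1 (X t) * coordFn 2 (X t) := rfl
    have e2 : P 2 = ∫ t in (0:ℝ)..T, coordFn 2 (X t) * coordFn 0 (X t) := rfl
    rw [e0, e1, e2]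
    rw [← intervalIntegral.integral_add (ii ((hcc 0).mul (hcc 1))) (ii ((hcc 1).mul (hcc 2)))
        (f := fun t => coordFn 0 (X t) * coordFn 1 (X t))
        (g := fun t => coordFn 1 (X t) * coordFn 2 (X t)),
      ← intervalIntegral.integral_add ((ii ((hcc 0).mul (hcc 1))).add (ii ((hcc 1).mul (hcc 2))))
        (ii ((hcc 2).mul (hcc 0)))
        (f := fun t => coordFn 0 (X t) * coordFn 1 (X t) + coordFn 1 (X t) * coordFn 2 (X t))
        (g := fun t => coordFn 2 (X t) * coordFn 0 (X t))]
    rfl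
  have hint : T * c ≤ P 0 + P 1 + P 2 := by
    have hmono := intervalIntegral.integral_mono_on (f := fun _ => c)
      (g := fun t => (X t).1 * (X t).2 + (X t).2 * (1 - (X t).1 - (X t).2)
        + (1 - (X t).1 - (X t).2) * (X t).1) hT.le (ii continuous_const)
      (ii (by fun_prop)) (fun t _ => hptc t)
    rw [intervalIntegral.integral_const] at hmono
    rw [hsum3]
    rw [sub_zero, smul_eq_mul] at hmono
    exact hmono
  have eAP : ∀ i : ZMod 3, avgPair X T i (i + 1) = (1 / T) * A i := fun i => rfl
  clear_value P A c
  have hP0 : 3 * z * T < P 0 := by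
    have h3 : P 0 + P 1 + P 2 = 3 * P 0 := by rw [hPall 1, hPall 2]; ring
    have hint2 : c * T ≤ P 0 + P 1 + P 2 := by rwa [mul_comm] at hint
    have h9 : 9 * z * T < c * T := mul_lt_mul_of_pos_right hc9 hT
    linarith only [h3, hint2, h9]
  -- final assembly
  refine ⟨?_, ?_, ?_, ?_⟩
  · intro i
    rw [eAP i, hAD i]
    field_simp
    ring
  · intro i j
    rw [hAD i, hAD j, hA i, hA j, hPall i, hPall j]
  · show -((1 / T) * ∫ t in (0:ℝ)..T, coordFn 1 (X t) * dotFn 0 (X t))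
      = -(∫ t in (0:ℝ)..T, coordFn 1 (X t) * dotFn 0 (X t)) / T
    ring
  · rw [hAD 0, hA 0]
    have hq : z * T - (P 0 - z * T) / 2 < 0 := by linarith
    have h1 : (0:ℝ) < 1 / T := by positivity
    nlinarith [mul_neg_of_pos_of_neg h1 hq]
end

section
/- Wendel's limit: for a > 0 and x > 0, Γ(Nx + a)/(N^{a-1} Γ(Nx + 1)) → x^{a-1} as N → ∞; moreover, for fixed x > 0 the sequence N ↦ Γ(Nx+a)/(N^{a-1}Γ(Nx+1)) is increasing in N when a < 1 and non-increasing when a ≥ 1 (the latter monotonicity and limit holding for all x ≥ 0). -/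
open Filter Real Topology

noncomputable def wphi (a u : ℝ) : ℝ := u ^ (1 - a) * (Real.Gamma (u + a) / Real.Gamma (u + 1))

noncomputable def wL (a : ℝ) (n : ℕ) (u : ℝ) : ℝ :=
  (1 - a) * Real.log u + ∑ j ∈ Finset.range (n + 1), (Real.log (u + 1 + j) - Real.log (u + a + j))

lemma hasDerivAt_log_shift (c : ℝ) {u : ℝ} (h : 0 < u + c) :
    HasDerivAt (fun y : ℝ => Real.log (y + c)) ((u + c)⁻¹) u := by
  simpa [Function.comp_def] using (Real.hasDerivAt_log h.ne').comp u ((hasDerivAt_id u).add_const c)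

lemma hasDerivAt_wL {a : ℝ} (ha : 0 < a) (n : ℕ) {u : ℝ} (hu : 0 < u) :
    HasDerivAt (wL a n)
      ((1 - a) * u⁻¹ + ∑ j ∈ Finset.range (n + 1), ((u + 1 + (j : ℝ))⁻¹ - (u + a + j)⁻¹)) u := by
  have h1 : HasDerivAt (fun y : ℝ => (1 - a) * Real.log y) ((1 - a) * u⁻¹) u :=
    (Real.hasDerivAt_log hu.ne').const_mul _
  have h2 : HasDerivAt (fun y : ℝ =>
      ∑ j ∈ Finset.range (n + 1), (Real.log (y + 1 + j) - Real.log (y + a + j)))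
      (∑ j ∈ Finset.range (n + 1), ((u + 1 + (j : ℝ))⁻¹ - (u + a + j)⁻¹)) u := by
    refine HasDerivAt.fun_sum fun j _ => ?_
    have hA : 0 < u + (1 + (j : ℝ)) := by positivity
    have hB : 0 < u + (a + (j : ℝ)) := by positivity
    have := (hasDerivAt_log_shift (1 + (j : ℝ)) hA).fun_sub (hasDerivAt_log_shift (a + (j : ℝ)) hB)
    simpa only [← add_assoc] using this
  exact h1.add h2

lemma dlow {a : ℝ} (ha : 0 < a) (ha1 : a < 1) {u : ℝ} (hu : 0 < u) (n : ℕ) :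
    (1 - a) * a / (u * (u + a) * (u + 1)) ≤
      (1 - a) * u⁻¹ + ∑ j ∈ Finset.range (n + 1), ((u + 1 + (j : ℝ))⁻¹ - (u + a + j)⁻¹) := by
  have h1a : (0:ℝ) < 1 - a := by linarith
  have hS : ∑ j ∈ Finset.range (n + 1), ((u + a + (j : ℝ))⁻¹ - (u + 1 + j)⁻¹)
      ≤ (1 - a) / ((u + a) * (u + 1)) + (1 - a) * ((u + 1)⁻¹ - (u + 1 + (n:ℝ))⁻¹) := by
    rw [Finset.sum_range_succ']
    have h0 : (u + a + ((0:ℕ) : ℝ))⁻¹ - (u + 1 + ((0:ℕ):ℝ))⁻¹ = (1 - a) / ((u + a) * (u + 1)) := by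
      push_cast
      rw [add_zero, add_zero, inv_sub_inv (by positivity) (by positivity)]
      ring_nf
    rw [h0]
    have htel : ∑ j ∈ Finset.range n, ((u + 1 + (j:ℝ))⁻¹ - (u + 1 + ((j:ℝ) + 1))⁻¹)
        = (u + 1)⁻¹ - (u + 1 + (n:ℝ))⁻¹ := by
      have := Finset.sum_range_sub' (fun j : ℕ => (u + 1 + (j : ℝ))⁻¹) n
      push_cast at this ⊢
      simpa using this
    have hterm : ∀ j ∈ Finset.range n,
        (u + a + (↑(j+1) : ℝ))⁻¹ - (u + 1 + (↑(j+1):ℝ))⁻¹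
          ≤ (1 - a) * ((u + 1 + (j:ℝ))⁻¹ - (u + 1 + ((j:ℝ) + 1))⁻¹) := by
      intro j _
      push_cast
      have hj : (0:ℝ) ≤ (j:ℝ) := Nat.cast_nonneg j
      have e1 : (u + a + ((j:ℝ) + 1))⁻¹ - (u + 1 + ((j:ℝ) + 1))⁻¹
          = (1 - a) / ((u + a + ((j:ℝ) + 1)) * (u + 1 + ((j:ℝ) + 1))) := by
        rw [inv_sub_inv (by positivity) (by positivity)]; ring_nf
      have e2 : (u + 1 + (j:ℝ))⁻¹ - (u + 1 + ((j:ℝ) + 1))⁻¹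
          = 1 / ((u + 1 + (j:ℝ)) * (u + 1 + ((j:ℝ) + 1))) := by
        rw [inv_sub_inv (by positivity) (by positivity)]; ring_nf
      rw [e1, e2, mul_one_div]
      apply div_le_div_of_nonneg_left h1a.le (by positivity)
      nlinarith [mul_pos (show (0:ℝ) < u + 1 + (j:ℝ) by positivity)
        (show (0:ℝ) < u + 1 + ((j:ℝ)+1) by positivity)]
    have hsum : ∑ j ∈ Finset.range n, ((u + a + (↑(j+1) : ℝ))⁻¹ - (u + 1 + (↑(j+1):ℝ))⁻¹)
        ≤ (1 - a) * ((u + 1)⁻¹ - (u + 1 + (n:ℝ))⁻¹) := by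
      calc ∑ j ∈ Finset.range n, ((u + a + (↑(j+1) : ℝ))⁻¹ - (u + 1 + (↑(j+1):ℝ))⁻¹)
          ≤ ∑ j ∈ Finset.range n, (1 - a) * ((u + 1 + (j:ℝ))⁻¹ - (u + 1 + ((j:ℝ) + 1))⁻¹) :=
            Finset.sum_le_sum hterm
        _ = (1 - a) * ((u + 1)⁻¹ - (u + 1 + (n:ℝ))⁻¹) := by rw [← Finset.mul_sum, htel]
    linarith
  have hflip : ∑ j ∈ Finset.range (n + 1), ((u + 1 + (j : ℝ))⁻¹ - (u + a + j)⁻¹)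
      = - ∑ j ∈ Finset.range (n + 1), ((u + a + (j : ℝ))⁻¹ - (u + 1 + j)⁻¹) := by
    rw [← Finset.sum_neg_distrib]
    exact Finset.sum_congr rfl fun j _ => by ring
  have hid : (1 - a) / ((u + a) * (u + 1)) + (1 - a) * (u + 1)⁻¹
      = (1 - a) * u⁻¹ - (1 - a) * a / (u * (u + a) * (u + 1)) := by
    field_simp
    ring
  have hpos : 0 ≤ (1 - a) * (u + 1 + (n:ℝ))⁻¹ := by positivity
  rw [hflip]
  linarith

lemma dhigh {a : ℝ} (ha1 : 1 ≤ a) {u : ℝ} (hu : 0 < u) (n : ℕ) :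
    (1 - a) * u⁻¹ + ∑ j ∈ Finset.range (n + 1), ((u + 1 + (j : ℝ))⁻¹ - (u + a + j)⁻¹) ≤ 0 := by
  have ha : (0:ℝ) < a := lt_of_lt_of_le one_pos ha1
  have htel : ∑ j ∈ Finset.range (n+1), ((u + (j:ℝ))⁻¹ - (u + ((j:ℝ) + 1))⁻¹)
      = u⁻¹ - (u + ((n:ℝ) + 1))⁻¹ := by
    have := Finset.sum_range_sub' (fun j : ℕ => (u + (j : ℝ))⁻¹) (n+1)
    push_cast at this ⊢
    simpa using this
  have hterm : ∀ j ∈ Finset.range (n+1),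
      (u + 1 + (j:ℝ))⁻¹ - (u + a + (j:ℝ))⁻¹
        ≤ (a - 1) * ((u + (j:ℝ))⁻¹ - (u + ((j:ℝ) + 1))⁻¹) := by
    intro j _
    have hj : (0:ℝ) ≤ (j:ℝ) := Nat.cast_nonneg j
    have e1 : (u + 1 + (j:ℝ))⁻¹ - (u + a + (j:ℝ))⁻¹
        = (a - 1) / ((u + 1 + (j:ℝ)) * (u + a + (j:ℝ))) := by
      rw [inv_sub_inv (by positivity) (by positivity)]; ring_nf
    have e2 : (u + (j:ℝ))⁻¹ - (u + ((j:ℝ) + 1))⁻¹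
        = 1 / ((u + (j:ℝ)) * (u + ((j:ℝ) + 1))) := by
      rw [inv_sub_inv (by positivity) (by positivity)]; ring_nf
    rw [e1, e2, mul_one_div]
    apply div_le_div_of_nonneg_left (by linarith) (by positivity)
    nlinarith [mul_pos (show (0:ℝ) < u + (j:ℝ) by positivity)
      (show (0:ℝ) < u + ((j:ℝ)+1) by positivity)]
  have hsum : ∑ j ∈ Finset.range (n+1), ((u + 1 + (j:ℝ))⁻¹ - (u + a + (j:ℝ))⁻¹)
      ≤ (a - 1) * (u⁻¹ - (u + ((n:ℝ) + 1))⁻¹) := by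
    calc ∑ j ∈ Finset.range (n+1), ((u + 1 + (j:ℝ))⁻¹ - (u + a + (j:ℝ))⁻¹)
        ≤ ∑ j ∈ Finset.range (n+1), (a - 1) * ((u + (j:ℝ))⁻¹ - (u + ((j:ℝ) + 1))⁻¹) :=
          Finset.sum_le_sum hterm
      _ = _ := by rw [← Finset.mul_sum, htel]
  have h1 : (a - 1) * (u⁻¹ - (u + ((n:ℝ) + 1))⁻¹) ≤ (a - 1) * u⁻¹ := by
    have : (0:ℝ) ≤ (u + ((n:ℝ) + 1))⁻¹ := by positivity
    nlinarith
  linarith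

lemma exp_wL {a : ℝ} (ha : 0 < a) {u : ℝ} (hu : 0 < u) (n : ℕ) :
    Real.exp (wL a n u) = u ^ (1 - a) *
      ((∏ j ∈ Finset.range (n + 1), (u + 1 + (j:ℝ))) / ∏ j ∈ Finset.range (n + 1), (u + a + (j:ℝ))) := by
  rw [wL, Real.exp_add, Real.exp_sum]
  congr 1
  · rw [Real.rpow_def_of_pos hu, mul_comm]
  · rw [← Finset.prod_div_distrib]
    refine Finset.prod_congr rfl fun j _ => ?_
    rw [Real.exp_sub, Real.exp_log (by positivity), Real.exp_log (by positivity)]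

lemma rep {a : ℝ} (ha : 0 < a) {u : ℝ} (hu : 0 < u) {n : ℕ} (hn : 1 ≤ n) :
    u ^ (1 - a) * (Real.GammaSeq (u + a) n / Real.GammaSeq (u + 1) n)
      = (n : ℝ) ^ (a - 1) * Real.exp (wL a n u) := by
  have hn0 : (0:ℝ) < n := by exact_mod_cast hn
  rw [exp_wL ha hu n, Real.GammaSeq, Real.GammaSeq]
  have hpa : (0:ℝ) < ∏ j ∈ Finset.range (n + 1), (u + a + (j:ℝ)) :=
    Finset.prod_pos fun j _ => by positivity
  have hp1 : (0:ℝ) < ∏ j ∈ Finset.range (n + 1), (u + 1 + (j:ℝ)) :=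
    Finset.prod_pos fun j _ => by positivity
  have hfac : (0:ℝ) < ((n.factorial : ℕ) : ℝ) := by exact_mod_cast Nat.factorial_pos n
  have hr1 : (0:ℝ) < (n:ℝ) ^ (u + 1) := Real.rpow_pos_of_pos hn0 _
  have hrw : (n:ℝ) ^ (u + a) = (n:ℝ) ^ (a - 1) * (n:ℝ) ^ (u + 1) := by
    rw [← Real.rpow_add hn0]; ring_nf
  rw [hrw]
  field_simp

lemma wphi_pos {a : ℝ} (ha : 0 < a) {u : ℝ} (hu : 0 < u) : 0 < wphi a u := by
  have := Real.Gamma_pos_of_pos (by positivity : (0:ℝ) < u + a)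
  have := Real.Gamma_pos_of_pos (by positivity : (0:ℝ) < u + 1)
  have := Real.rpow_pos_of_pos hu (1 - a)
  rw [wphi]; positivity

lemma tendsto_rep {a : ℝ} (ha : 0 < a) {u : ℝ} (hu : 0 < u) :
    Tendsto (fun n : ℕ => (n : ℝ) ^ (a - 1) * Real.exp (wL a n u)) atTop (𝓝 (wphi a u)) := by
  have h2 : Real.Gamma (u + 1) ≠ 0 := (Real.Gamma_pos_of_pos (by positivity)).ne'
  have h := ((Real.GammaSeq_tendsto_Gamma (u + a)).div
      (Real.GammaSeq_tendsto_Gamma (u + 1)) h2).const_mul (u ^ (1 - a))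
  refine h.congr' ?_
  filter_upwards [eventually_ge_atTop 1] with n hn
  exact rep ha hu hn

lemma wphi_lt {a : ℝ} (ha : 0 < a) (ha1 : a < 1) {s t : ℝ} (hs : 0 < s) (hst : s < t) :
    wphi a s < wphi a t := by
  have ht : 0 < t := hs.trans hst
  set c : ℝ := (1 - a) * a / (t * (t + a) * (t + 1)) with hc
  have hcpos : 0 < c := by
    have : (0:ℝ) < 1 - a := by linarith
    positivity
  have key : ∀ n : ℕ, c * (t - s) + wL a n s ≤ wL a n t := by
    intro n
    have hmono : MonotoneOn (fun u => wL a n u - c * u) (Set.Icc s t) := by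
      have hderiv : ∀ u ∈ Set.Icc s t, HasDerivAt (fun u => wL a n u - c * u)
          ((1 - a) * u⁻¹ + ∑ j ∈ Finset.range (n + 1), ((u + 1 + (j : ℝ))⁻¹ - (u + a + j)⁻¹) - c) u := by
        intro u hu
        have hcu : HasDerivAt (fun u : ℝ => c * u) c u := by
          simpa using (hasDerivAt_id u).const_mul c
        exact (hasDerivAt_wL ha n (hs.trans_le hu.1)).sub hcu
      refine monotoneOn_of_hasDerivWithinAt_nonneg (convex_Icc s t)
        (fun u hu => ((hderiv u hu).continuousAt).continuousWithinAt)
        (fun u hu => ((hderiv u (interior_subset hu)).hasDerivWithinAt)) ?_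
      intro u hu
      rw [interior_Icc] at hu
      have hu0 : 0 < u := hs.trans hu.1
      have h1 := dlow ha ha1 hu0 n
      have h2 : c ≤ (1 - a) * a / (u * (u + a) * (u + 1)) := by
        rw [hc]
        have h1a : (0:ℝ) < 1 - a := by linarith
        have hut : u ≤ t := hu.2.le
        apply div_le_div_of_nonneg_left (by positivity) (by positivity)
        have h3 : u * (u + a) ≤ t * (t + a) := by nlinarith
        calc u * (u + a) * (u + 1) ≤ t * (t + a) * (u + 1) :=
              mul_le_mul_of_nonneg_right h3 (by positivity)
          _ ≤ t * (t + a) * (t + 1) := by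
              have : (0:ℝ) ≤ t * (t + a) := by positivity
              nlinarith
      linarith
    have := hmono (Set.left_mem_Icc.mpr hst.le) (Set.right_mem_Icc.mpr hst.le) hst.le
    simp only at this
    have hmul : c * s + c * (t - s) = c * t := by ring
    nlinarith [this]
  have hineq : Real.exp (c * (t - s)) * wphi a s ≤ wphi a t := by
    refine le_of_tendsto_of_tendsto' ((tendsto_rep ha hs).const_mul _) (tendsto_rep ha ht) ?_
    intro n
    have hb : (0:ℝ) ≤ (n:ℝ) ^ (a - 1) := Real.rpow_nonneg (Nat.cast_nonneg n) _
    calc Real.exp (c * (t - s)) * ((n:ℝ) ^ (a - 1) * Real.exp (wL a n s))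
        = (n:ℝ) ^ (a - 1) * (Real.exp (c * (t - s)) * Real.exp (wL a n s)) := by ring
      _ = (n:ℝ) ^ (a - 1) * Real.exp (c * (t - s) + wL a n s) := by rw [Real.exp_add]
      _ ≤ (n:ℝ) ^ (a - 1) * Real.exp (wL a n t) := by
          have := Real.exp_le_exp.mpr (key n)
          exact mul_le_mul_of_nonneg_left this hb
  have h1 : 1 < Real.exp (c * (t - s)) := by
    have hpos : 0 < c * (t - s) := by nlinarith
    calc (1:ℝ) = Real.exp 0 := Real.exp_zero.symm
      _ < _ := Real.exp_lt_exp.mpr hpos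
  calc wphi a s < Real.exp (c * (t - s)) * wphi a s := by
        nlinarith [wphi_pos ha hs, h1]
    _ ≤ wphi a t := hineq

lemma wphi_anti {a : ℝ} (ha1 : 1 ≤ a) {s t : ℝ} (hs : 0 < s) (hst : s ≤ t) :
    wphi a t ≤ wphi a s := by
  have ha : (0:ℝ) < a := lt_of_lt_of_le one_pos ha1
  rcases eq_or_lt_of_le hst with rfl | hlt
  · exact le_refl _
  have ht : 0 < t := hs.trans hlt
  have key : ∀ n : ℕ, wL a n t ≤ wL a n s := by
    intro n
    have hanti : AntitoneOn (wL a n) (Set.Icc s t) := by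
      refine antitoneOn_of_hasDerivWithinAt_nonpos (convex_Icc s t)
        (fun u hu => ((hasDerivAt_wL ha n (hs.trans_le hu.1)).continuousAt).continuousWithinAt)
        (fun u hu => ((hasDerivAt_wL ha n (hs.trans_le (interior_subset hu).1)).hasDerivWithinAt)) ?_
      intro u hu
      rw [interior_Icc] at hu
      exact dhigh ha1 (hs.trans hu.1) n
    exact hanti (Set.left_mem_Icc.mpr hst) (Set.right_mem_Icc.mpr hst) hst
  refine le_of_tendsto_of_tendsto' (tendsto_rep ha ht) (tendsto_rep ha hs) fun n => ?_
  have hb : (0:ℝ) ≤ (n:ℝ) ^ (a - 1) := Real.rpow_nonneg (Nat.cast_nonneg n) _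
  exact mul_le_mul_of_nonneg_left (Real.exp_le_exp.mpr (key n)) hb

lemma wphi_le_one {a : ℝ} (ha : 0 < a) (ha1 : a < 1) {u : ℝ} (hu : 0 < u) : wphi a u ≤ 1 := by
  have h1a : (0:ℝ) < 1 - a := by linarith
  have hG := Real.Gamma_mul_add_mul_le_rpow_Gamma_mul_rpow_Gamma hu (by positivity : (0:ℝ) < u + 1)
    h1a ha (by ring)
  have he : (1 - a) * u + a * (u + 1) = u + a := by ring
  rw [he] at hG
  have hG1 : Real.Gamma (u + 1) = u * Real.Gamma u := Real.Gamma_add_one hu.ne'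
  have hGu : 0 < Real.Gamma u := Real.Gamma_pos_of_pos hu
  have hGu1 : 0 < Real.Gamma (u + 1) := Real.Gamma_pos_of_pos (by positivity)
  rw [wphi, ← mul_div_assoc, div_le_one hGu1]
  calc u ^ (1 - a) * Real.Gamma (u + a)
      ≤ u ^ (1 - a) * (Real.Gamma u ^ (1 - a) * Real.Gamma (u + 1) ^ a) := by
        apply mul_le_mul_of_nonneg_left hG (Real.rpow_nonneg hu.le _)
    _ = (u * Real.Gamma u) ^ (1 - a) * Real.Gamma (u + 1) ^ a := by
        rw [Real.mul_rpow hu.le hGu.le]; ring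
    _ = Real.Gamma (u + 1) ^ (1 - a) * Real.Gamma (u + 1) ^ a := by rw [← hG1]
    _ = Real.Gamma (u + 1) := by
        rw [← Real.rpow_add hGu1]; norm_num

lemma wphi_ge {a : ℝ} (ha : 0 < a) (ha1 : a < 1) {u : ℝ} (hu : 0 < u) :
    (u / (u + a)) ^ (1 - a) ≤ wphi a u := by
  have h1a : (0:ℝ) < 1 - a := by linarith
  have hua : (0:ℝ) < u + a := by positivity
  have hG := Real.Gamma_mul_add_mul_le_rpow_Gamma_mul_rpow_Gamma hua
    (by positivity : (0:ℝ) < u + a + 1) ha h1a (by ring)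
  have he : a * (u + a) + (1 - a) * (u + a + 1) = u + 1 := by ring
  rw [he] at hG
  have hr : Real.Gamma (u + a + 1) = (u + a) * Real.Gamma (u + a) := Real.Gamma_add_one hua.ne'
  have hGa : 0 < Real.Gamma (u + a) := Real.Gamma_pos_of_pos hua
  have hub : Real.Gamma (u + 1) ≤ Real.Gamma (u + a) * (u + a) ^ (1 - a) := by
    calc Real.Gamma (u + 1) ≤ Real.Gamma (u + a) ^ a * Real.Gamma (u + a + 1) ^ (1 - a) := hG
      _ = Real.Gamma (u + a) ^ a * ((u + a) ^ (1 - a) * Real.Gamma (u + a) ^ (1 - a)) := by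
          rw [hr, Real.mul_rpow hua.le hGa.le]
      _ = (Real.Gamma (u + a) ^ a * Real.Gamma (u + a) ^ (1 - a)) * (u + a) ^ (1 - a) := by ring
      _ = Real.Gamma (u + a) * (u + a) ^ (1 - a) := by
          rw [← Real.rpow_add hGa]; norm_num
  rw [wphi, Real.div_rpow hu.le hua.le, ← mul_div_assoc,
    div_le_div_iff₀ (Real.rpow_pos_of_pos hua _) (Real.Gamma_pos_of_pos (by positivity))]
  calc u ^ (1 - a) * Real.Gamma (u + 1)
      ≤ u ^ (1 - a) * (Real.Gamma (u + a) * (u + a) ^ (1 - a)) :=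
        mul_le_mul_of_nonneg_left hub (Real.rpow_nonneg hu.le _)
    _ = u ^ (1 - a) * Real.Gamma (u + a) * (u + a) ^ (1 - a) := by ring

lemma wphi_one {u : ℝ} (hu : 0 < u) : wphi 1 u = 1 := by
  rw [wphi]
  have : Real.Gamma (u + 1) ≠ 0 := (Real.Gamma_pos_of_pos (by positivity)).ne'
  simp [div_self this]

lemma tendsto_base {a : ℝ} (ha : 0 < a) :
    Tendsto (fun u : ℝ => (u / (u + a)) ^ (1 - a)) atTop (𝓝 1) := by
  have h0 : Tendsto (fun u : ℝ => a / (u + a)) atTop (𝓝 0) :=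
    tendsto_const_nhds.div_atTop (tendsto_atTop_add_const_right _ a tendsto_id)
  have h1 : Tendsto (fun u : ℝ => u / (u + a)) atTop (𝓝 1) := by
    have := (tendsto_const_nhds (x := (1:ℝ))).sub h0
    rw [sub_zero] at this
    refine this.congr' ?_
    filter_upwards [eventually_gt_atTop 0] with u hu
    have : u + a ≠ 0 := by positivity
    field_simp
    ring
  have := h1.rpow_const (p := 1 - a) (Or.inl one_ne_zero)
  simpa using this

lemma wphi_tendsto_one {a : ℝ} (ha : 0 < a) : Tendsto (wphi a) atTop (𝓝 1) := by
  suffices H : ∀ n : ℕ, ∀ a : ℝ, 0 < a → a ≤ n + 1 → Tendsto (wphi a) atTop (𝓝 1) by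
    refine H ⌈a⌉₊ a ha ((Nat.le_ceil a).trans ?_)
    push_cast; linarith
  intro n
  induction n with
  | zero =>
    intro a ha ha1
    norm_num at ha1
    rcases lt_or_eq_of_le ha1 with h | h
    · refine tendsto_of_tendsto_of_tendsto_of_le_of_le' (tendsto_base ha) tendsto_const_nhds ?_ ?_
      · filter_upwards [eventually_gt_atTop 0] with u hu; exact wphi_ge ha h hu
      · filter_upwards [eventually_gt_atTop 0] with u hu; exact wphi_le_one ha h hu
    · subst h
      refine tendsto_const_nhds.congr' ?_
      filter_upwards [eventually_gt_atTop 0] with u hu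
      exact (wphi_one hu).symm
  | succ n ih =>
    intro a ha ha1
    by_cases hle : a ≤ n + 1
    · exact ih a ha hle
    push_neg at hle
    have hb : 0 < a - 1 := by
      have : (0:ℝ) ≤ n := Nat.cast_nonneg n
      linarith
    have hb1 : a - 1 ≤ n + 1 := by push_cast at ha1 ⊢; linarith
    have hrat : Tendsto (fun u : ℝ => (u + (a - 1)) / u) atTop (𝓝 1) := by
      have h0 : Tendsto (fun u : ℝ => (a - 1) * u⁻¹) atTop (𝓝 0) := by
        simpa using tendsto_inv_atTop_zero.const_mul (a - 1)
      have := (tendsto_const_nhds (x := (1:ℝ))).add h0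
      rw [add_zero] at this
      refine this.congr' ?_
      filter_upwards [eventually_gt_atTop 0] with u hu
      field_simp
    have hmul := (ih (a - 1) hb hb1).mul hrat
    rw [one_mul] at hmul
    refine hmul.congr' ?_
    filter_upwards [eventually_gt_atTop 0] with u hu
    have hub : 0 < u + (a - 1) := by linarith
    have hg : Real.Gamma (u + a) = (u + (a - 1)) * Real.Gamma (u + (a - 1)) := by
      have := Real.Gamma_add_one hub.ne'
      rw [show u + (a - 1) + 1 = u + a by ring] at this
      exact this
    have hup : u ^ (1 - a) = u ^ (1 - (a - 1)) * u⁻¹ := by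
      rw [← Real.rpow_neg_one u, ← Real.rpow_add hu]
      ring_nf
    rw [wphi, wphi, hg, hup]
    field_simp

lemma rew {a : ℝ} (ha : 0 < a) {x M : ℝ} (hx : 0 < x) (hM : 0 < M) :
    Real.Gamma (M * x + a) / (M ^ (a - 1) * Real.Gamma (M * x + 1))
      = x ^ (a - 1) * wphi a (M * x) := by
  have hMx : 0 < M * x := mul_pos hM hx
  have h1 : (M * x) ^ (1 - a) = M ^ (1 - a) * x ^ (1 - a) := Real.mul_rpow hM.le hx.le
  have hxc : x ^ (a - 1) * x ^ (1 - a) = 1 := by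
    rw [← Real.rpow_add hx]; norm_num
  have hMc : M ^ (1 - a) = (M ^ (a - 1))⁻¹ := by
    rw [show (1 - a) = -(a - 1) by ring, Real.rpow_neg hM.le]
  have hG : Real.Gamma (M * x + 1) ≠ 0 := (Real.Gamma_pos_of_pos (by positivity)).ne'
  have hMp : (0:ℝ) < M ^ (a - 1) := Real.rpow_pos_of_pos hM _
  rw [wphi, h1, hMc]
  field_simp
  linear_combination (-1 : ℝ) * hxc

/-- Wendel's limit Γ(Nx+a)/(N^{a-1}Γ(Nx+1)) → x^{a-1} as N → ∞
(for x > 0, and also for x ≥ 0 when a ≥ 1), together with the monotonicity in N: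
increasing when a < 1 (x > 0), non-increasing when a ≥ 1 (x ≥ 0). -/
theorem stmt_17 (a : ℝ) (ha : 0 < a) :
    (∀ x : ℝ, 0 < x →
      Tendsto (fun N : ℕ => Real.Gamma (N * x + a) / ((N : ℝ) ^ (a - 1) * Real.Gamma (N * x + 1)))
        atTop (nhds (x ^ (a - 1)))) ∧
    (a < 1 → ∀ x : ℝ, 0 < x →
      StrictMono (fun n : ℕ =>
        Real.Gamma ((n + 1) * x + a) / (((n : ℝ) + 1) ^ (a - 1) * Real.Gamma ((n + 1) * x + 1)))) ∧
    (1 ≤ a → ∀ x : ℝ, 0 ≤ x →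
      Antitone (fun n : ℕ =>
        Real.Gamma ((n + 1) * x + a) / (((n : ℝ) + 1) ^ (a - 1) * Real.Gamma ((n + 1) * x + 1))) ∧
      Tendsto (fun n : ℕ =>
        Real.Gamma ((n + 1) * x + a) / (((n : ℝ) + 1) ^ (a - 1) * Real.Gamma ((n + 1) * x + 1)))
        atTop (nhds (x ^ (a - 1)))) := by
  refine ⟨?_, ?_, ?_⟩
  · intro x hx
    have hcomp : Tendsto (fun N : ℕ => (N : ℝ) * x) atTop atTop :=
      Tendsto.atTop_mul_const hx tendsto_natCast_atTop_atTop
    have h := ((wphi_tendsto_one ha).comp hcomp).const_mul (x ^ (a - 1))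
    rw [mul_one] at h
    refine h.congr' ?_
    filter_upwards [eventually_ge_atTop 1] with N hN
    have hN0 : (0:ℝ) < N := by exact_mod_cast hN
    exact (rew ha hx hN0).symm
  · intro ha1 x hx
    refine strictMono_nat_of_lt_succ fun n => ?_
    have hM1 : (0:ℝ) < (n:ℝ) + 1 := by positivity
    have hM2 : (0:ℝ) < ((n+1:ℕ):ℝ) + 1 := by positivity
    have e1 := rew ha hx hM1
    have e2 := rew ha hx hM2
    simp only [e1, e2]
    push_cast
    have harg : ((n:ℝ) + 1) * x < ((n:ℝ) + 1 + 1) * x := by nlinarith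
    exact mul_lt_mul_of_pos_left
      (by push_cast at harg ⊢; exact wphi_lt ha ha1 (by positivity) harg)
      (Real.rpow_pos_of_pos hx _)
  · intro ha1 x hx
    rcases hx.eq_or_lt with rfl | hx
    · constructor
      · intro n m hnm
        simp only [mul_zero, zero_add, Real.Gamma_one, mul_one]
        have hd : ((n:ℝ) + 1) ^ (a - 1) ≤ ((m:ℝ) + 1) ^ (a - 1) :=
          Real.rpow_le_rpow (by positivity) (by push_cast; exact_mod_cast by linarith [hnm] : ((n:ℝ)+1) ≤ (m:ℝ)+1) (by linarith)
        exact div_le_div_of_nonneg_left (Real.Gamma_pos_of_pos ha).le (by positivity) hd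
      · rcases eq_or_lt_of_le ha1 with rfl | hgt
        · simp only [mul_zero, zero_add, Real.Gamma_one, mul_one, sub_self, Real.rpow_zero,
            one_mul, div_one]
          simpa using tendsto_const_nhds
        · have hz : (0:ℝ) ^ (a - 1) = 0 := Real.zero_rpow (by linarith)
          rw [hz]
          simp only [mul_zero, zero_add, Real.Gamma_one, mul_one]
          have hd : Tendsto (fun n : ℕ => ((n:ℝ) + 1) ^ (a - 1)) atTop atTop :=
            (tendsto_rpow_atTop (by linarith : 0 < a - 1)).comp
              (tendsto_atTop_add_const_right _ 1 tendsto_natCast_atTop_atTop)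
          exact tendsto_const_nhds.div_atTop hd
    · constructor
      · intro n m hnm
        have hMn : (0:ℝ) < (n:ℝ) + 1 := by positivity
        have hMm : (0:ℝ) < (m:ℝ) + 1 := by positivity
        have e1 := rew ha hx hMn
        have e2 := rew ha hx hMm
        simp only [e1, e2]
        refine mul_le_mul_of_nonneg_left ?_ (Real.rpow_nonneg hx.le _)
        refine wphi_anti ha1 (by positivity) ?_
        have : ((n:ℝ) + 1) ≤ (m:ℝ) + 1 := by
          have : (n:ℝ) ≤ m := by exact_mod_cast hnm
          linarith
        nlinarith
      · have hcomp : Tendsto (fun n : ℕ => ((n:ℝ) + 1) * x) atTop atTop :=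
          Tendsto.atTop_mul_const hx
            (tendsto_atTop_add_const_right _ 1 tendsto_natCast_atTop_atTop)
        have h := ((wphi_tendsto_one ha).comp hcomp).const_mul (x ^ (a - 1))
        rw [mul_one] at h
        refine h.congr' ?_
        filter_upwards with n
        exact (rew ha hx (by positivity : (0:ℝ) < (n:ℝ) + 1)).symm
end
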